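/- arXiv:0803.1492 — 5 statements merged into one kernel-verified Lean document; each statement's English description precedes it below -/
import Mathlib

section
/- In the setting of the interacting Fleming–Viot cocycle Λ with ρ > 0: fix distinct ξ₁, ξ₂ ∈ I and f, g ∈ C(E); let 𝐟 ∈ C(E)^I₀ equal f at coordinate ξ₁ and 0 elsewhere, and 𝐠 ∈ C(E)^I₀ equal g at coordinate ξ₂ and 0 elsewhere. If X ∈ M₁(E)^I satisfies the cocycle identity in both orders, i.e. Λ(𝐟 + 𝐠, X) = Λ(𝐟, S_𝐠 X) + Λ(𝐠, X) and Λ(𝐟 + 𝐠, X) = Λ(𝐠, S_𝐟 X) + Λ(𝐟, X), then a(ξ₁, ξ₂) ⟨X_{ξ₂}^{g} − X_{ξ₂}, f⟩ = a(ξ₂, ξ₁) ⟨X_{ξ₁}^{f} − X_{ξ₁}, g⟩. -/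
open MeasureTheory Real ProbabilityTheory

noncomputable section

/-- The pairing `⟨μ, g⟩ = ∫ g dμ`. -/
def pairM {E : Type*} [MeasurableSpace E] (μ : Measure E) (g : E → ℝ) : ℝ := ∫ x, g x ∂μ

/-- `⟨S(μ), f⟩` for the selection operator with fitness function `V`. -/
def selPair {E : Type*} [MeasurableSpace E] (V : E → E → ℝ) (μ : Measure E) (f : E → ℝ) : ℝ :=
  (∫ u, (∫ v, V u v ∂μ) * f u ∂μ) - (∫ u, f u ∂μ) * (∫ u, ∫ v, V u v ∂μ ∂μ)

/-- `⟨R(μ), f⟩` for the recombination operator with recombination kernel `η`. -/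
def recPair {E : Type*} [MeasurableSpace E] (η : Kernel (E × E) E) (μ : Measure E)
    (f : E → ℝ) : ℝ :=
  (∫ v, ∫ w, ∫ z, f z ∂(η (v, w)) ∂μ ∂μ) - ∫ z, f z ∂μ

variable {E : Type*} [MetricSpace E] [CompactSpace E] [MeasurableSpace E] [BorelSpace E]
variable {I : Type*}

/-- The drift `⟨b_ξ(X), f⟩` of the interacting Fleming-Viot process with migration matrix `a`,
mutation operator `A`, selection `(s, V)` and recombination `(r, η)`. -/
def bPair (a : I → I → ℝ) (A : C(E, ℝ) →L[ℝ] C(E, ℝ)) (V : E → E → ℝ)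
    (η : Kernel (E × E) E) (s r ρ : ℝ) (X : I → Measure E) (ξ : I) (f : C(E, ℝ)) : ℝ :=
  pairM (X ξ) (A f) + ρ * (∑' ξ' : I, a ξ ξ' * (pairM (X ξ') f - pairM (X ξ) f))
    + s * selPair V (X ξ) f + r * recPair η (X ξ) f

/-- `⟨b(X), 𝐟⟩ = Σ_ξ ⟨b_ξ(X), f_ξ⟩`. -/
def bTotal (a : I → I → ℝ) (A : C(E, ℝ) →L[ℝ] C(E, ℝ)) (V : E → E → ℝ)
    (η : Kernel (E × E) E) (s r ρ : ℝ) (X : I → Measure E) (f : I → C(E, ℝ)) : ℝ :=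
  ∑' ξ : I, bPair a A V η s r ρ X ξ (f ξ)

/-- The cocycle `Λ(𝐟, X) = 2∫₀¹ ⟨b(S_{u𝐟}X), 𝐟⟩ du`. -/
def Lambda (a : I → I → ℝ) (A : C(E, ℝ) →L[ℝ] C(E, ℝ)) (V : E → E → ℝ)
    (η : Kernel (E × E) E) (s r ρ : ℝ) (f : I → C(E, ℝ)) (X : I → Measure E) : ℝ :=
  2 * ∫ u in (0:ℝ)..1, bTotal a A V η s r ρ (fun ξ => (X ξ).tilted (u • f ξ)) f

set_option linter.unusedSectionVars false
set_option maxHeartbeats 1000000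

lemma intBdd {μ : Measure E} [IsFiniteMeasure μ] {h : E → ℝ} (hm : AEStronglyMeasurable h μ)
    {C : ℝ} (hb : ∀ x, |h x| ≤ C) : Integrable h μ :=
  (integrable_const C).mono' hm (ae_of_all _ fun x => by simpa [Real.norm_eq_abs] using hb x)

lemma expBdd (f : C(E,ℝ)) (u : ℝ) (x : E) : exp (u * f x) ≤ exp (|u| * ‖f‖) := by
  apply Real.exp_le_exp.2
  calc u * f x ≤ |u * f x| := le_abs_self _
    _ = |u| * |f x| := abs_mul _ _
    _ ≤ |u| * ‖f‖ := by
        have := f.norm_coe_le_norm x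
        exact mul_le_mul_of_nonneg_left (by simpa [Real.norm_eq_abs] using this) (abs_nonneg u)

lemma integrable_exp_cm {μ : Measure E} [IsFiniteMeasure μ] (f : C(E,ℝ)) (u : ℝ) :
    Integrable (fun x => exp (u * f x)) μ :=
  intBdd ((Real.continuous_exp.comp ((continuous_const.mul f.continuous))).aestronglyMeasurable)
    (fun x => by rw [abs_of_nonneg (Real.exp_nonneg _)]; exact expBdd f u x)

lemma isProb_tilted {μ : Measure E} [IsProbabilityMeasure μ] (f : C(E,ℝ)) :
    IsProbabilityMeasure (μ.tilted ⇑f) := by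
  refine isProbabilityMeasure_tilted ?_
  simpa using integrable_exp_cm f 1

lemma pairM_bdd {μ : Measure E} [IsProbabilityMeasure μ] (f : C(E,ℝ)) :
    |pairM μ ⇑f| ≤ ‖f‖ := by
  rw [pairM, ← Real.norm_eq_abs]
  have := norm_integral_le_of_norm_le_const (μ := μ) (f := fun x => f x) (C := ‖f‖)
    (ae_of_all _ fun x => f.norm_coe_le_norm x)
  simpa using this
lemma tilted_int {μ : Measure E} (g ψ : E → ℝ) :
    ∫ x, ψ x ∂(μ.tilted g) = (∫ x, exp (g x) * ψ x ∂μ) / (∫ x, exp (g x) ∂μ) := by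
  rw [integral_tilted]
  simp only [smul_eq_mul, div_mul_eq_mul_div]
  rw [integral_div]

lemma N_pos {μ : Measure E} [IsProbabilityMeasure μ] (f : C(E,ℝ)) (u : ℝ) :
    0 < ∫ x, exp (u * f x) ∂μ :=
  integral_exp_pos (integrable_exp_cm f u)

lemma contOn_single {μ : Measure E} [IsProbabilityMeasure μ] (f : C(E,ℝ)) {h : E → ℝ}
    (hm : Measurable h) {C : ℝ} (hb : ∀ x, |h x| ≤ C) :
    ContinuousOn (fun u => ∫ x, exp (u * f x) * h x ∂μ) (Set.Icc (0:ℝ) 1) := by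
  apply continuousOn_of_dominated (bound := fun _ => exp ‖f‖ * C)
  · intro u hu
    exact ((Real.continuous_exp.comp (continuous_const.mul f.continuous)).measurable.mul
      hm).aestronglyMeasurable
  · intro u hu
    refine ae_of_all _ fun x => ?_
    rw [Real.norm_eq_abs, abs_mul, abs_of_nonneg (Real.exp_nonneg _)]
    have h1 : exp (u * f x) ≤ exp ‖f‖ := by
      refine le_trans (expBdd f u x) (Real.exp_le_exp.2 ?_)
      have : |u| ≤ 1 := by
        rw [abs_of_nonneg hu.1]; exact hu.2
      calc |u| * ‖f‖ ≤ 1 * ‖f‖ := mul_le_mul_of_nonneg_right this (norm_nonneg f)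
        _ = ‖f‖ := one_mul _
    exact mul_le_mul h1 (hb x) (abs_nonneg _) (Real.exp_nonneg _)
  · exact integrable_const _
  · refine ae_of_all _ fun x => ?_
    exact ((Real.continuous_exp.comp (continuous_id.mul continuous_const)).mul
      continuous_const).continuousOn
lemma expf_le (f : C(E,ℝ)) {u : ℝ} (hu : u ∈ Set.Icc (0:ℝ) 1) (x : E) :
    exp (u * f x) ≤ exp ‖f‖ := by
  refine le_trans (expBdd f u x) (Real.exp_le_exp.2 ?_)
  have h1 : |u| ≤ 1 := by rw [abs_of_nonneg hu.1]; exact hu.2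
  calc |u| * ‖f‖ ≤ 1 * ‖f‖ := mul_le_mul_of_nonneg_right h1 (norm_nonneg f)
    _ = ‖f‖ := one_mul _

lemma inner_bdd {μ : Measure E} [IsProbabilityMeasure μ] (f : C(E,ℝ)) {W : E → E → ℝ}
    {CW : ℝ} (hWb : ∀ x y, |W x y| ≤ CW) {u : ℝ} (hu : u ∈ Set.Icc (0:ℝ) 1) (x : E) :
    |∫ y, exp (u * f y) * W x y ∂μ| ≤ exp ‖f‖ * CW := by
  rw [← Real.norm_eq_abs]
  have := norm_integral_le_of_norm_le_const (μ := μ)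
    (f := fun y => exp (u * f y) * W x y) (C := exp ‖f‖ * CW)
    (ae_of_all _ fun y => by
      rw [Real.norm_eq_abs, abs_mul, abs_of_nonneg (Real.exp_nonneg _)]
      exact mul_le_mul (expf_le f hu y) (hWb x y) (abs_nonneg _) (Real.exp_nonneg _))
  simpa using this

lemma contOn_nested {μ : Measure E} [IsProbabilityMeasure μ] (f : C(E,ℝ)) {W : E → E → ℝ}
    (hW : Measurable fun p : E × E => W p.1 p.2) {CW : ℝ} (hWb : ∀ x y, |W x y| ≤ CW)
    {h : E → ℝ} (hm : Measurable h) {Ch : ℝ} (hb : ∀ x, |h x| ≤ Ch) :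
    ContinuousOn
      (fun u => ∫ x, (∫ y, exp (u * f y) * W x y ∂μ) * (exp (u * f x) * h x) ∂μ)
      (Set.Icc (0:ℝ) 1) := by
  apply continuousOn_of_dominated (bound := fun _ => (exp ‖f‖ * CW) * (exp ‖f‖ * Ch))
  · intro u hu
    have hin : StronglyMeasurable fun x => ∫ y, exp (u * f y) * W x y ∂μ := by
      have : StronglyMeasurable fun p : E × E => exp (u * f p.2) * W p.1 p.2 :=
        ((Real.continuous_exp.comp
          (continuous_const.mul (f.continuous.comp continuous_snd))).measurable.mul
          hW).stronglyMeasurable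
      exact this.integral_prod_right'
    exact (hin.measurable.mul
      (((Real.continuous_exp.comp (continuous_const.mul f.continuous)).measurable).mul
        hm)).aestronglyMeasurable
  · intro u hu
    refine ae_of_all _ fun x => ?_
    rw [Real.norm_eq_abs, abs_mul]
    have h1 := inner_bdd (μ := μ) f hWb hu x
    have h2 : |exp (u * f x) * h x| ≤ exp ‖f‖ * Ch := by
      rw [abs_mul, abs_of_nonneg (Real.exp_nonneg _)]
      exact mul_le_mul (expf_le f hu x) (hb x) (abs_nonneg _) (Real.exp_nonneg _)
    exact mul_le_mul h1 h2 (abs_nonneg _) (le_trans (abs_nonneg _) h1)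
  · exact integrable_const _
  · refine ae_of_all _ fun x => ?_
    have hinc : ContinuousOn (fun u => ∫ y, exp (u * f y) * W x y ∂μ) (Set.Icc (0:ℝ) 1) :=
      contOn_single f (hW.comp measurable_prodMk_left) (fun y => hWb x y)
    exact hinc.mul ((Real.continuous_exp.comp
      (continuous_id.mul continuous_const)).mul continuous_const).continuousOn
lemma pair_tilted {μ : Measure E} (f : C(E,ℝ)) (u : ℝ) (h : E → ℝ) :
    pairM (μ.tilted (u • ⇑f)) h
      = (∫ x, exp (u * f x) * h x ∂μ) / (∫ x, exp (u * f x) ∂μ) := by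
  rw [pairM, tilted_int]
  simp only [Pi.smul_apply, smul_eq_mul]
lemma nested_tilted {μ : Measure E} (f : C(E,ℝ)) (u : ℝ) (W : E → E → ℝ) (h : E → ℝ) :
    (∫ x, (∫ y, W x y ∂(μ.tilted (u • ⇑f))) * h x ∂(μ.tilted (u • ⇑f)))
      = (∫ x, (∫ y, exp (u * f y) * W x y ∂μ) * (exp (u * f x) * h x) ∂μ)
        / ((∫ x, exp (u * f x) ∂μ) * (∫ x, exp (u * f x) ∂μ)) := by
  rw [tilted_int]
  simp only [Pi.smul_apply, smul_eq_mul]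
  rw [← div_div]
  congr 1
  rw [← integral_div]
  apply integral_congr_ae
  refine ae_of_all _ fun x => ?_
  simp only
  rw [show (∫ y, W x y ∂(μ.tilted (u • ⇑f)))
      = (∫ y, exp (u * f y) * W x y ∂μ) / (∫ y, exp (u * f y) ∂μ) by
    rw [tilted_int]; simp only [Pi.smul_apply, smul_eq_mul]]
  ring
lemma contOn_N {μ : Measure E} [IsProbabilityMeasure μ] (f : C(E,ℝ)) :
    ContinuousOn (fun u => ∫ x, exp (u * f x) ∂μ) (Set.Icc (0:ℝ) 1) := by
  have := contOn_single (μ := μ) f (h := fun _ => (1:ℝ)) measurable_const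
    (C := 1) (fun x => by norm_num)
  simpa using this

lemma contOn_pair_tilted {μ : Measure E} [IsProbabilityMeasure μ] (f : C(E,ℝ)) {h : E → ℝ}
    (hm : Measurable h) {C : ℝ} (hb : ∀ x, |h x| ≤ C) :
    ContinuousOn (fun u => pairM (μ.tilted (u • ⇑f)) h) (Set.Icc (0:ℝ) 1) := by
  simp only [pair_tilted]
  exact (contOn_single f hm hb).div (contOn_N f) (fun u _ => (N_pos f u).ne')

lemma contOn_nested_tilted {μ : Measure E} [IsProbabilityMeasure μ] (f : C(E,ℝ))
    {W : E → E → ℝ} (hW : Measurable fun p : E × E => W p.1 p.2) {CW : ℝ}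
    (hWb : ∀ x y, |W x y| ≤ CW) {h : E → ℝ} (hm : Measurable h) {Ch : ℝ}
    (hb : ∀ x, |h x| ≤ Ch) :
    ContinuousOn
      (fun u => ∫ x, (∫ y, W x y ∂(μ.tilted (u • ⇑f))) * h x ∂(μ.tilted (u • ⇑f)))
      (Set.Icc (0:ℝ) 1) := by
  simp only [nested_tilted]
  exact (contOn_nested f hW hWb hm hb).div ((contOn_N f).mul (contOn_N f))
    (fun u _ => (mul_pos (N_pos f u) (N_pos f u)).ne')
lemma contOn_nested_tilted1 {μ : Measure E} [IsProbabilityMeasure μ] (f : C(E,ℝ))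
    {W : E → E → ℝ} (hW : Measurable fun p : E × E => W p.1 p.2) {CW : ℝ}
    (hWb : ∀ x y, |W x y| ≤ CW) :
    ContinuousOn
      (fun u => ∫ x, (∫ y, W x y ∂(μ.tilted (u • ⇑f))) ∂(μ.tilted (u • ⇑f)))
      (Set.Icc (0:ℝ) 1) := by
  have := contOn_nested_tilted (μ := μ) f hW hWb (h := fun _ => (1:ℝ)) measurable_const
    (Ch := 1) (fun x => by norm_num)
  simpa [mul_one] using this

lemma K_meas (η : Kernel (E × E) E) [IsMarkovKernel η] (f : C(E,ℝ)) :
    Measurable fun p : E × E => ∫ z, f z ∂η p := by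
  have : StronglyMeasurable fun q : (E × E) × E => f q.2 :=
    (f.continuous.measurable.comp measurable_snd).stronglyMeasurable
  exact this.integral_kernel_prod_right'.measurable

lemma K_bdd (η : Kernel (E × E) E) [IsMarkovKernel η] (f : C(E,ℝ)) (v w : E) :
    |∫ z, f z ∂η (v, w)| ≤ ‖f‖ := by
  rw [← Real.norm_eq_abs]
  have := norm_integral_le_of_norm_le_const (μ := η (v, w)) (f := fun z => f z) (C := ‖f‖)
    (ae_of_all _ fun z => f.norm_coe_le_norm z)
  simpa using this

lemma contOn_bG (A : C(E, ℝ) →L[ℝ] C(E, ℝ)) (V : E → E → ℝ)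
    (hVmeas : Measurable fun p : E × E => V p.1 p.2) {CV : ℝ} (hVbdd : ∀ u v, |V u v| ≤ CV)
    (η : Kernel (E × E) E) [IsMarkovKernel η] (s r ρ : ℝ)
    (μ : Measure E) [IsProbabilityMeasure μ] (f : C(E,ℝ)) :
    ContinuousOn (fun u => pairM (μ.tilted (u • ⇑f)) ⇑(A f)
      - ρ * pairM (μ.tilted (u • ⇑f)) ⇑f
      + s * selPair V (μ.tilted (u • ⇑f)) ⇑f
      + r * recPair η (μ.tilted (u • ⇑f)) ⇑f) (Set.Icc (0:ℝ) 1) := by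
  have hAf : ContinuousOn (fun u => pairM (μ.tilted (u • ⇑f)) ⇑(A f)) (Set.Icc (0:ℝ) 1) :=
    contOn_pair_tilted f (A f).continuous.measurable
      (fun x => by simpa [Real.norm_eq_abs] using (A f).norm_coe_le_norm x)
  have hf : ContinuousOn (fun u => pairM (μ.tilted (u • ⇑f)) ⇑f) (Set.Icc (0:ℝ) 1) :=
    contOn_pair_tilted f f.continuous.measurable
      (fun x => by simpa [Real.norm_eq_abs] using f.norm_coe_le_norm x)
  have hsel : ContinuousOn (fun u => selPair V (μ.tilted (u • ⇑f)) ⇑f) (Set.Icc (0:ℝ) 1) := by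
    unfold selPair
    refine ContinuousOn.sub ?_ (ContinuousOn.mul ?_ ?_)
    · exact contOn_nested_tilted f hVmeas hVbdd f.continuous.measurable
        (fun x => by simpa [Real.norm_eq_abs] using f.norm_coe_le_norm x)
    · exact hf
    · exact contOn_nested_tilted1 f hVmeas hVbdd
  have hrec : ContinuousOn (fun u => recPair η (μ.tilted (u • ⇑f)) ⇑f) (Set.Icc (0:ℝ) 1) := by
    unfold recPair
    refine ContinuousOn.sub ?_ hf
    exact contOn_nested_tilted1 f (K_meas η f) (K_bdd η f)
  exact ((hAf.sub (continuousOn_const.mul hf)).add (continuousOn_const.mul hsel)).add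
    (continuousOn_const.mul hrec)
lemma bPair_zero (a : I → I → ℝ) (A : C(E, ℝ) →L[ℝ] C(E, ℝ)) (V : E → E → ℝ)
    (η : Kernel (E × E) E) (s r ρ : ℝ) (Y : I → Measure E) (ξ : I) :
    bPair a A V η s r ρ Y ξ 0 = 0 := by
  simp [bPair, pairM, selPair, recPair]

lemma bTotal_single [Countable I] [DecidableEq I] (a : I → I → ℝ)
    (A : C(E, ℝ) →L[ℝ] C(E, ℝ)) (V : E → E → ℝ)
    (η : Kernel (E × E) E) (s r ρ : ℝ) (Y : I → Measure E) (ξ₀ : I) (f : C(E,ℝ)) :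
    bTotal a A V η s r ρ Y (Pi.single ξ₀ f) = bPair a A V η s r ρ Y ξ₀ f := by
  rw [bTotal]
  rw [tsum_eq_single ξ₀ (fun ξ hξ => by
    rw [Pi.single_eq_of_ne hξ, bPair_zero])]
  rw [Pi.single_eq_same]

lemma summable_mig [Countable I] (a : I → I → ℝ) (hapos : ∀ ξ ξ', 0 ≤ a ξ ξ')
    (harow : ∀ ξ, HasSum (a ξ) 1) (ξ₁ : I) (f : C(E,ℝ)) (Z : I → Measure E)
    (hZ : ∀ ξ, IsProbabilityMeasure (Z ξ)) :
    Summable fun ξ' => a ξ₁ ξ' * pairM (Z ξ') ⇑f := by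
  refine Summable.of_norm_bounded (g := fun ξ' => a ξ₁ ξ' * ‖f‖)
    ((harow ξ₁).summable.mul_right _) (fun ξ' => ?_)
  rw [Real.norm_eq_abs, abs_mul, abs_of_nonneg (hapos ξ₁ ξ')]
  haveI := hZ ξ'
  exact mul_le_mul_of_nonneg_left (pairM_bdd f) (hapos ξ₁ ξ')
lemma bPair_eval [Countable I] [DecidableEq I] (a : I → I → ℝ) (ha0 : ∀ ξ, a ξ ξ = 0)
    (hapos : ∀ ξ ξ', 0 ≤ a ξ ξ') (harow : ∀ ξ, HasSum (a ξ) 1)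
    (A : C(E, ℝ) →L[ℝ] C(E, ℝ)) (V : E → E → ℝ) (η : Kernel (E × E) E) (s r ρ : ℝ)
    (ξ₁ : I) (f : C(E,ℝ)) (Z : I → Measure E) (hZ : ∀ ξ, IsProbabilityMeasure (Z ξ))
    (u : ℝ) :
    bPair a A V η s r ρ (fun ξ => (Z ξ).tilted (u • ⇑((Pi.single ξ₁ f : I → C(E,ℝ)) ξ))) ξ₁ f
      = (pairM ((Z ξ₁).tilted (u • ⇑f)) ⇑(A f) - ρ * pairM ((Z ξ₁).tilted (u • ⇑f)) ⇑f
          + s * selPair V ((Z ξ₁).tilted (u • ⇑f)) ⇑f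
          + r * recPair η ((Z ξ₁).tilted (u • ⇑f)) ⇑f)
        + ρ * ∑' ξ', a ξ₁ ξ' * pairM (Z ξ') ⇑f := by
  have hW1 : (Z ξ₁).tilted (u • ⇑((Pi.single ξ₁ f : I → C(E,ℝ)) ξ₁))
      = (Z ξ₁).tilted (u • ⇑f) := by
    rw [Pi.single_eq_same]
  have hWne : ∀ ξ, ξ ≠ ξ₁ →
      (Z ξ).tilted (u • ⇑((Pi.single ξ₁ f : I → C(E,ℝ)) ξ)) = Z ξ := by
    intro ξ h
    haveI := hZ ξ
    rw [Pi.single_eq_of_ne h, ContinuousMap.coe_zero, smul_zero, tilted_zero]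
  rw [bPair]
  simp only [hW1]
  have hts : (∑' ξ', a ξ₁ ξ' *
        (pairM ((Z ξ').tilted (u • ⇑((Pi.single ξ₁ f : I → C(E,ℝ)) ξ'))) ⇑f
          - pairM ((Z ξ₁).tilted (u • ⇑f)) ⇑f))
      = (∑' ξ', a ξ₁ ξ' * pairM (Z ξ') ⇑f)
        - pairM ((Z ξ₁).tilted (u • ⇑f)) ⇑f := by
    have step1 : ∀ ξ', a ξ₁ ξ' *
        (pairM ((Z ξ').tilted (u • ⇑((Pi.single ξ₁ f : I → C(E,ℝ)) ξ'))) ⇑f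
          - pairM ((Z ξ₁).tilted (u • ⇑f)) ⇑f)
        = a ξ₁ ξ' * pairM (Z ξ') ⇑f
          - a ξ₁ ξ' * pairM ((Z ξ₁).tilted (u • ⇑f)) ⇑f := by
      intro ξ'
      by_cases h : ξ' = ξ₁
      · subst h; simp [ha0]
      · rw [hWne ξ' h, mul_sub]
    rw [tsum_congr step1,
      Summable.tsum_sub (summable_mig a hapos harow ξ₁ f Z hZ) ((harow ξ₁).summable.mul_right _),
      tsum_mul_right, (harow ξ₁).tsum_eq, one_mul]
  rw [hts]
  ring

lemma Lambda_single [Countable I] [DecidableEq I] (a : I → I → ℝ) (ha0 : ∀ ξ, a ξ ξ = 0)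
    (hapos : ∀ ξ ξ', 0 ≤ a ξ ξ') (harow : ∀ ξ, HasSum (a ξ) 1)
    (A : C(E, ℝ) →L[ℝ] C(E, ℝ)) (V : E → E → ℝ)
    (hVmeas : Measurable fun p : E × E => V p.1 p.2) {CV : ℝ} (hVbdd : ∀ u v, |V u v| ≤ CV)
    (η : Kernel (E × E) E) [IsMarkovKernel η] (s r ρ : ℝ)
    (ξ₁ : I) (f : C(E,ℝ)) (Z : I → Measure E) (hZ : ∀ ξ, IsProbabilityMeasure (Z ξ)) :
    Lambda a A V η s r ρ (Pi.single ξ₁ f) Z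
      = 2 * (∫ u in (0:ℝ)..1, (pairM ((Z ξ₁).tilted (u • ⇑f)) ⇑(A f)
          - ρ * pairM ((Z ξ₁).tilted (u • ⇑f)) ⇑f
          + s * selPair V ((Z ξ₁).tilted (u • ⇑f)) ⇑f
          + r * recPair η ((Z ξ₁).tilted (u • ⇑f)) ⇑f))
        + 2 * ρ * ∑' ξ', a ξ₁ ξ' * pairM (Z ξ') ⇑f := by
  haveI := hZ ξ₁
  rw [Lambda]
  rw [intervalIntegral.integral_congr (g := fun u =>
      (pairM ((Z ξ₁).tilted (u • ⇑f)) ⇑(A f) - ρ * pairM ((Z ξ₁).tilted (u • ⇑f)) ⇑f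
        + s * selPair V ((Z ξ₁).tilted (u • ⇑f)) ⇑f
        + r * recPair η ((Z ξ₁).tilted (u • ⇑f)) ⇑f)
      + ρ * ∑' ξ', a ξ₁ ξ' * pairM (Z ξ') ⇑f)
    (fun u _ => by
      rw [bTotal_single, bPair_eval a ha0 hapos harow A V η s r ρ ξ₁ f Z hZ u])]
  have hbG : IntervalIntegrable (fun u =>
      pairM ((Z ξ₁).tilted (u • ⇑f)) ⇑(A f) - ρ * pairM ((Z ξ₁).tilted (u • ⇑f)) ⇑f
        + s * selPair V ((Z ξ₁).tilted (u • ⇑f)) ⇑f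
        + r * recPair η ((Z ξ₁).tilted (u • ⇑f)) ⇑f) MeasureTheory.volume 0 1 := by
    apply ContinuousOn.intervalIntegrable
    rw [Set.uIcc_of_le (by norm_num : (0:ℝ) ≤ 1)]
    exact contOn_bG A V hVmeas hVbdd η s r ρ (Z ξ₁) f
  rw [intervalIntegral.integral_add hbG intervalIntegrable_const,
    intervalIntegral.integral_const]
  simp only [sub_zero, one_smul, smul_eq_mul]
  ring
lemma tsum_diff [Countable I] [DecidableEq I] (a : I → I → ℝ)
    (hapos : ∀ ξ ξ', 0 ≤ a ξ ξ') (harow : ∀ ξ, HasSum (a ξ) 1) (ξ₁ ξ₂ : I) (f : C(E,ℝ))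
    (Z Z' : I → Measure E) (hZ : ∀ ξ, IsProbabilityMeasure (Z ξ))
    (hZ' : ∀ ξ, IsProbabilityMeasure (Z' ξ)) (hoff : ∀ ξ, ξ ≠ ξ₂ → Z ξ = Z' ξ) :
    (∑' ξ', a ξ₁ ξ' * pairM (Z ξ') ⇑f) - (∑' ξ', a ξ₁ ξ' * pairM (Z' ξ') ⇑f)
      = a ξ₁ ξ₂ * (pairM (Z ξ₂) ⇑f - pairM (Z' ξ₂) ⇑f) := by
  rw [Summable.tsum_eq_add_tsum_ite (summable_mig a hapos harow ξ₁ f Z hZ) ξ₂,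
    Summable.tsum_eq_add_tsum_ite (summable_mig a hapos harow ξ₁ f Z' hZ') ξ₂]
  have : (∑' ξ', if ξ' = ξ₂ then 0 else a ξ₁ ξ' * pairM (Z ξ') ⇑f)
      = ∑' ξ', if ξ' = ξ₂ then 0 else a ξ₁ ξ' * pairM (Z' ξ') ⇑f := by
    refine tsum_congr fun ξ' => ?_
    by_cases h : ξ' = ξ₂
    · simp [h]
    · simp only [h, if_false, hoff ξ' h]
  rw [this]
  ring

lemma Lambda_diff [Countable I] [DecidableEq I] (a : I → I → ℝ) (ha0 : ∀ ξ, a ξ ξ = 0)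
    (hapos : ∀ ξ ξ', 0 ≤ a ξ ξ') (harow : ∀ ξ, HasSum (a ξ) 1)
    (A : C(E, ℝ) →L[ℝ] C(E, ℝ)) (V : E → E → ℝ)
    (hVmeas : Measurable fun p : E × E => V p.1 p.2) {CV : ℝ} (hVbdd : ∀ u v, |V u v| ≤ CV)
    (η : Kernel (E × E) E) [IsMarkovKernel η] (s r ρ : ℝ)
    (ξ₁ ξ₂ : I) (f : C(E,ℝ)) (Z Z' : I → Measure E)
    (hZ : ∀ ξ, IsProbabilityMeasure (Z ξ)) (hZ' : ∀ ξ, IsProbabilityMeasure (Z' ξ))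
    (h1 : Z ξ₁ = Z' ξ₁) (hoff : ∀ ξ, ξ ≠ ξ₂ → Z ξ = Z' ξ) :
    Lambda a A V η s r ρ (Pi.single ξ₁ f) Z - Lambda a A V η s r ρ (Pi.single ξ₁ f) Z'
      = 2 * ρ * (a ξ₁ ξ₂ * (pairM (Z ξ₂) ⇑f - pairM (Z' ξ₂) ⇑f)) := by
  rw [Lambda_single a ha0 hapos harow A V hVmeas hVbdd η s r ρ ξ₁ f Z hZ,
    Lambda_single a ha0 hapos harow A V hVmeas hVbdd η s r ρ ξ₁ f Z' hZ', h1]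
  linear_combination 2 * ρ * tsum_diff a hapos harow ξ₁ ξ₂ f Z Z' hZ hZ' hoff
/-- With the interacting Fleming-Viot cocycle `Λ` (migration rate `ρ > 0`),
fix distinct sites `ξ₁ ≠ ξ₂`, `f, g ∈ C(E)`, and the single-site families `𝐟 = f·1_{ξ₁}`,
`𝐠 = g·1_{ξ₂}`.  If `X ∈ M₁(E)^I` satisfies the cocycle identity in both orders,
`Λ(𝐟+𝐠, X) = Λ(𝐟, S_𝐠X) + Λ(𝐠, X)` and `Λ(𝐟+𝐠, X) = Λ(𝐠, S_𝐟X) + Λ(𝐟, X)`, then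
`a(ξ₁,ξ₂)⟨X_{ξ₂}^g − X_{ξ₂}, f⟩ = a(ξ₂,ξ₁)⟨X_{ξ₁}^f − X_{ξ₁}, g⟩`. -/
theorem cocycle_identity_symmetry
    [Countable I] [DecidableEq I]
    (a : I → I → ℝ) (ha0 : ∀ ξ, a ξ ξ = 0) (hapos : ∀ ξ ξ', 0 ≤ a ξ ξ')
    (harow : ∀ ξ, HasSum (a ξ) 1)
    (A : C(E, ℝ) →L[ℝ] C(E, ℝ))
    (V : E → E → ℝ) (hVsymm : ∀ u v, V u v = V v u)
    (hVmeas : Measurable fun p : E × E => V p.1 p.2) (hVbdd : ∃ C : ℝ, ∀ u v, |V u v| ≤ C)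
    (η : Kernel (E × E) E) [IsMarkovKernel η]
    (s r ρ : ℝ) (hs : 0 ≤ s) (hr : 0 ≤ r) (hρ : 0 < ρ)
    (ξ₁ ξ₂ : I) (hne : ξ₁ ≠ ξ₂) (f g : C(E, ℝ))
    (X : I → Measure E) (hX : ∀ ξ, IsProbabilityMeasure (X ξ))
    (hcoc₁ : Lambda a A V η s r ρ (Pi.single ξ₁ f + Pi.single ξ₂ g) X
      = Lambda a A V η s r ρ (Pi.single ξ₁ f)
          (fun ζ => (X ζ).tilted ((Pi.single ξ₂ g : I → C(E, ℝ)) ζ))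
        + Lambda a A V η s r ρ (Pi.single ξ₂ g) X)
    (hcoc₂ : Lambda a A V η s r ρ (Pi.single ξ₁ f + Pi.single ξ₂ g) X
      = Lambda a A V η s r ρ (Pi.single ξ₂ g)
          (fun ζ => (X ζ).tilted ((Pi.single ξ₁ f : I → C(E, ℝ)) ζ))
        + Lambda a A V η s r ρ (Pi.single ξ₁ f) X) :
    a ξ₁ ξ₂ * (pairM ((X ξ₂).tilted g) f - pairM (X ξ₂) f)
      = a ξ₂ ξ₁ * (pairM ((X ξ₁).tilted f) g - pairM (X ξ₁) g) := by

  obtain ⟨CV, hVb⟩ := hVbdd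
  have hYprob : ∀ ζ, IsProbabilityMeasure
      ((X ζ).tilted ((Pi.single ξ₂ g : I → C(E, ℝ)) ζ)) := fun ζ => by
    haveI := hX ζ; exact isProb_tilted _
  have hZprob : ∀ ζ, IsProbabilityMeasure
      ((X ζ).tilted ((Pi.single ξ₁ f : I → C(E, ℝ)) ζ)) := fun ζ => by
    haveI := hX ζ; exact isProb_tilted _
  have hY1 : (fun ζ => (X ζ).tilted ((Pi.single ξ₂ g : I → C(E, ℝ)) ζ)) ξ₁ = X ξ₁ := by
    haveI := hX ξ₁
    simp only [Pi.single_eq_of_ne hne, ContinuousMap.coe_zero, tilted_zero]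
  have hYoff : ∀ ξ, ξ ≠ ξ₂ →
      (fun ζ => (X ζ).tilted ((Pi.single ξ₂ g : I → C(E, ℝ)) ζ)) ξ = X ξ := by
    intro ξ h
    haveI := hX ξ
    simp only [Pi.single_eq_of_ne h, ContinuousMap.coe_zero, tilted_zero]
  have hZ2 : (fun ζ => (X ζ).tilted ((Pi.single ξ₁ f : I → C(E, ℝ)) ζ)) ξ₂ = X ξ₂ := by
    haveI := hX ξ₂
    simp only [Pi.single_eq_of_ne hne.symm, ContinuousMap.coe_zero, tilted_zero]
  have hZoff : ∀ ξ, ξ ≠ ξ₁ →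
      (fun ζ => (X ζ).tilted ((Pi.single ξ₁ f : I → C(E, ℝ)) ζ)) ξ = X ξ := by
    intro ξ h
    haveI := hX ξ
    simp only [Pi.single_eq_of_ne h, ContinuousMap.coe_zero, tilted_zero]
  have d1 := Lambda_diff a ha0 hapos harow A V hVmeas hVb η s r ρ ξ₁ ξ₂ f
    (fun ζ => (X ζ).tilted ((Pi.single ξ₂ g : I → C(E, ℝ)) ζ)) X hYprob hX hY1 hYoff
  have d2 := Lambda_diff a ha0 hapos harow A V hVmeas hVb η s r ρ ξ₂ ξ₁ g
    (fun ζ => (X ζ).tilted ((Pi.single ξ₁ f : I → C(E, ℝ)) ζ)) X hZprob hX hZ2 hZoff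
  have eY2 : (fun ζ => (X ζ).tilted ((Pi.single ξ₂ g : I → C(E, ℝ)) ζ)) ξ₂
      = (X ξ₂).tilted ⇑g := by simp only [Pi.single_eq_same]
  have eZ1 : (fun ζ => (X ζ).tilted ((Pi.single ξ₁ f : I → C(E, ℝ)) ζ)) ξ₁
      = (X ξ₁).tilted ⇑f := by simp only [Pi.single_eq_same]
  simp only [Pi.single_eq_same] at d1
  simp only [Pi.single_eq_same] at d2
  have key : 2 * ρ * (a ξ₁ ξ₂ * (pairM ((X ξ₂).tilted ⇑g) ⇑f - pairM (X ξ₂) ⇑f))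
      = 2 * ρ * (a ξ₂ ξ₁ * (pairM ((X ξ₁).tilted ⇑f) ⇑g - pairM (X ξ₁) ⇑g)) := by
    linarith [hcoc₁, hcoc₂, d1, d2]
  have h2ρ : (2 : ℝ) * ρ ≠ 0 := by positivity
  exact mul_left_cancel₀ h2ρ key

end
end

section
/- Let E be a compact metric space, I a countable set, and a : I × I → [0,∞) with a(ξ,ξ) = 0 and Σ_{ξ'} a(ξ,ξ') = 1 for each ξ. Let Π be a Borel probability measure on M₁(E)^I such that for every pair of distinct ξ₁, ξ₂ ∈ I and every pair of continuous functions f, g : E → ℝ, for Π-almost every X one has a(ξ₁, ξ₂) ⟨X_{ξ₂}^{g} − X_{ξ₂}, f⟩ = a(ξ₂, ξ₁) ⟨X_{ξ₁}^{f} − X_{ξ₁}, g⟩ (the symmetry identity derived from reversibility of the interacting Fleming–Viot process with ρ > 0). Then for every ξ ∈ Î := {ξ ∈ I : a(η,ξ) > 0 for some η ∈ I}, the coordinate X_ξ is a Dirac measure for Π-almost every X. -/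
open MeasureTheory Real
open scoped ENNReal NNReal

noncomputable section

instance (priority := 100) {α : Type*} [MeasurableSpace α] :
    MeasurableSpace (ProbabilityMeasure α) :=
  inferInstanceAs (MeasurableSpace {μ : Measure α // IsProbabilityMeasure μ})

section Helpers
variable {E : Type*} [MetricSpace E] [CompactSpace E] [MeasurableSpace E] [BorelSpace E]

lemma cont_int (ν : Measure E) [IsFiniteMeasure ν] {f : E → ℝ} (hf : Continuous f) :
    Integrable f ν :=
  hf.integrable_of_hasCompactSupport (HasCompactSupport.of_compactSpace f)

lemma pair_bound (ν : Measure E) [IsProbabilityMeasure ν] (f : C(E, ℝ)) :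
    |∫ x, f x ∂ν| ≤ ‖f‖ := by
  have := norm_integral_le_of_norm_le_const (μ := ν) (f := fun x => f x) (C := ‖f‖)
    (Filter.Eventually.of_forall fun x => f.norm_coe_le_norm x)
  simpa using this

lemma continuous_int (ν : Measure E) [IsProbabilityMeasure ν] :
    Continuous (fun f : C(E, ℝ) => ∫ x, f x ∂ν) := by
  have : LipschitzWith 1 (fun f : C(E, ℝ) => ∫ x, f x ∂ν) := by
    refine LipschitzWith.of_dist_le_mul fun f g => ?_
    rw [dist_eq_norm, dist_eq_norm, ← integral_sub (cont_int ν f.continuous) (cont_int ν g.continuous)]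
    have := norm_integral_le_of_norm_le_const (μ := ν) (f := fun x => f x - g x) (C := ‖f - g‖)
      (Filter.Eventually.of_forall fun x => by simpa using (f - g).norm_coe_le_norm x)
    simpa using this
  exact this.continuous

lemma tilted_eq_self (μ : Measure E) [IsProbabilityMeasure μ] (g : C(E, ℝ))
    (h : ∀ f : C(E, ℝ), ∫ x, f x ∂(μ.tilted g) = ∫ x, f x ∂μ) : μ.tilted g = μ := by
  apply ext_of_forall_lintegral_eq_of_IsFiniteMeasure
  intro f
  have h1 : ∫⁻ x, f x ∂(μ.tilted g) ≠ ⊤ := by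
    haveI : IsProbabilityMeasure (μ.tilted g) :=
      isProbabilityMeasure_tilted (cont_int μ (continuous_exp.comp g.continuous))
    exact (BoundedContinuousFunction.lintegral_lt_top_of_nnreal _ f).ne
  have h2 : ∫⁻ x, f x ∂μ ≠ ⊤ := (BoundedContinuousFunction.lintegral_lt_top_of_nnreal _ f).ne
  rw [← ENNReal.toReal_eq_toReal_iff' h1 h2,
    BoundedContinuousFunction.toReal_lintegral_coe_eq_integral,
    BoundedContinuousFunction.toReal_lintegral_coe_eq_integral]
  exact h ⟨fun x => (f x : ℝ), NNReal.continuous_coe.comp f.continuous⟩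

lemma ae_const_of_tilted_eq_self (μ : Measure E) [IsProbabilityMeasure μ] (g : C(E, ℝ))
    (h : μ.tilted g = μ) : ∀ᵐ x ∂μ, g x = log (∫ x, exp (g x) ∂μ) := by
  set Z := ∫ x, exp (g x) ∂μ with hZ
  have hZpos : 0 < Z := integral_exp_pos (cont_int μ (continuous_exp.comp g.continuous))
  have h1 : μ.withDensity (fun x => ENNReal.ofReal (exp (g x) / Z)) = μ.withDensity (fun _ => (1:ℝ≥0∞)) := by
    rw [show (fun _ : E => (1:ℝ≥0∞)) = 1 from rfl, withDensity_one]; exact h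
  rw [withDensity_eq_iff_of_sigmaFinite
    (by exact (ENNReal.measurable_ofReal.comp
      ((continuous_exp.comp g.continuous).measurable.div_const Z)).aemeasurable)
    aemeasurable_const] at h1
  filter_upwards [h1] with x hx
  have : exp (g x) / Z = 1 := by
    have := hx
    rw [ENNReal.ofReal_eq_one] at this
    exact this
  have : exp (g x) = Z := by field_simp at this; linarith
  rw [← this, log_exp]

lemma eq_dirac_of_singleton (μ : Measure E) [IsProbabilityMeasure μ] (u : E)
    (hu : μ {u} = 1) : μ = Measure.dirac u := by
  ext s hs
  rw [Measure.dirac_apply' u hs]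
  by_cases h : u ∈ s
  · rw [Set.indicator_of_mem h]
    refine le_antisymm prob_le_one ?_
    calc (1:ℝ≥0∞) = μ {u} := hu.symm
    _ ≤ μ s := measure_mono (Set.singleton_subset_iff.mpr h)
  · rw [Set.indicator_of_notMem h]
    have h1 : μ {u}ᶜ = 0 := by
      rw [measure_compl (MeasurableSet.singleton u) (measure_ne_top μ _), hu, measure_univ,
        tsub_self]
    exact le_antisymm ((measure_mono (Set.subset_compl_singleton_iff.mpr h)).trans h1.le)
      zero_le

lemma dirac_of_pairing (μ : Measure E) [IsProbabilityMeasure μ]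
    (D : Set C(E,ℝ)) (hDd : Dense D) (hDc : D.Countable)
    (h : ∀ g ∈ D, ∀ f ∈ D, ∫ x, f x ∂(μ.tilted g) = ∫ x, f x ∂μ) :
    ∃ u, μ = Measure.dirac u := by
  have hall : ∀ g ∈ D, ∀ f : C(E,ℝ), ∫ x, f x ∂(μ.tilted g) = ∫ x, f x ∂μ := by
    intro g hg
    haveI : IsProbabilityMeasure (μ.tilted ⇑g) :=
      isProbabilityMeasure_tilted (cont_int μ (continuous_exp.comp g.continuous))
    have heq := Continuous.ext_on hDd (continuous_int (μ.tilted ⇑g)) (continuous_int μ)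
      (fun f hf => h g hg f hf)
    exact fun f => congrFun heq f
  have hconst : ∀ g ∈ D, ∀ᵐ x ∂μ, g x = log (∫ x, exp (g x) ∂μ) :=
    fun g hg => ae_const_of_tilted_eq_self μ g (tilted_eq_self μ g (hall g hg))
  set S := ⋂ g ∈ D, {x : E | g x = log (∫ x, exp (g x) ∂μ)} with hS
  have hScompl : μ Sᶜ = 0 := by
    rw [hS, Set.compl_iInter₂]
    refine (measure_biUnion_null_iff hDc).mpr fun g hg => ?_
    have := hconst g hg
    rwa [ae_iff] at this
  have hSone : (1:ℝ≥0∞) ≤ μ S := by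
    have : μ Set.univ ≤ μ S + μ Sᶜ := by
      rw [← Set.union_compl_self S]; exact measure_union_le _ _
    rwa [measure_univ, hScompl, add_zero] at this
  have hSne : S.Nonempty := by
    apply MeasureTheory.nonempty_of_measure_ne_zero (μ := μ)
    intro h0; rw [h0] at hSone; simp at hSone
  obtain ⟨u, hu⟩ := hSne
  have hsub : S ⊆ {u} := by
    intro x hx
    by_contra hxu
    have hxu' : x ≠ u := fun hh => hxu (hh ▸ rfl)
    have hd : 0 < dist x u := dist_pos.mpr hxu'
    set φ : C(E, ℝ) := ⟨fun y => dist y u, continuous_id.dist continuous_const⟩ with hφ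
    obtain ⟨g, hgball, hgD⟩ := Metric.dense_iff.mp hDd φ (dist x u / 3) (by positivity)
    rw [Metric.mem_ball] at hgball
    have hgx : g x = log (∫ x, exp (g x) ∂μ) := by
      have := Set.mem_iInter₂.mp hx g hgD; exact this
    have hgu : g u = log (∫ x, exp (g x) ∂μ) := by
      have := Set.mem_iInter₂.mp hu g hgD; exact this
    have h1 : dist (g x) (φ x) ≤ dist g φ := ContinuousMap.dist_apply_le_dist x
    have h2 : dist (g u) (φ u) ≤ dist g φ := ContinuousMap.dist_apply_le_dist u
    have hφx : φ x = dist x u := rfl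
    have hφu : φ u = 0 := by simp [hφ]
    have hgd : dist g φ < dist x u / 3 := hgball
    have : dist x u ≤ dist (φ x) (g x) + dist (g u) (φ u) := by
      have := dist_triangle (φ x) (g x) (φ u)
      have h4 : dist (g x) (φ u) = dist (g u) (φ u) := by rw [hgx, ← hgu]
      calc dist x u = dist (φ x) (φ u) := by rw [hφx, hφu]; simp [Real.dist_eq, abs_of_nonneg dist_nonneg]
      _ ≤ dist (φ x) (g x) + dist (g x) (φ u) := dist_triangle _ _ _
      _ = dist (φ x) (g x) + dist (g u) (φ u) := by rw [h4]
    rw [dist_comm (φ x) (g x)] at this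
    linarith [lt_of_le_of_lt h1 hgd, lt_of_le_of_lt h2 hgd, this]
  have huone : μ {u} = 1 := le_antisymm prob_le_one (le_trans hSone (measure_mono hsub))
  exact ⟨u, eq_dirac_of_singleton μ u huone⟩

lemma pairM_smul (ν : Measure E) (c : ℝ) (g : E → ℝ) :
    pairM ν (c • g) = c * pairM ν g := by
  simp only [pairM, Pi.smul_apply, smul_eq_mul]
  exact integral_const_mul c g


end Helpers

/-- Let `E` be a compact metric space, `I` countable, and `a` a migration
matrix (`a(ξ,ξ) = 0`, nonnegative, unit row sums).  Let `Π` be a Borel probability measure on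
`M₁(E)^I` such that for all distinct `ξ₁, ξ₂` and all continuous `f, g : E → ℝ`, for `Π`-a.e.
`X`: `a(ξ₁,ξ₂)⟨X_{ξ₂}^g − X_{ξ₂}, f⟩ = a(ξ₂,ξ₁)⟨X_{ξ₁}^f − X_{ξ₁}, g⟩`.  Then for every
`ξ ∈ Î = {ξ : ∃ η, a(η,ξ) > 0}`, `X_ξ` is a Dirac measure for `Π`-a.e. `X`. -/
theorem dirac_of_symmetry_identity
    {E : Type*} [MetricSpace E] [CompactSpace E] [MeasurableSpace E] [BorelSpace E]
    {I : Type*} [Countable I]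
    (a : I → I → ℝ) (ha0 : ∀ ξ, a ξ ξ = 0) (hapos : ∀ ξ ξ', 0 ≤ a ξ ξ')
    (harow : ∀ ξ, HasSum (a ξ) 1)
    (Pi : Measure (I → ProbabilityMeasure E)) [IsProbabilityMeasure Pi]
    (hsym : ∀ ξ₁ ξ₂ : I, ξ₁ ≠ ξ₂ → ∀ f g : C(E, ℝ),
      ∀ᵐ X ∂Pi,
        a ξ₁ ξ₂ * (pairM ((X ξ₂ : Measure E).tilted g) f - pairM (X ξ₂ : Measure E) f)
          = a ξ₂ ξ₁ * (pairM ((X ξ₁ : Measure E).tilted f) g - pairM (X ξ₁ : Measure E) g))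
    (ξ : I) (hξ : ∃ η : I, 0 < a η ξ) :
    ∀ᵐ X ∂Pi, ∃ u : E, (X ξ : Measure E) = Measure.dirac u := by
  obtain ⟨η, hη⟩ := hξ
  have hne : η ≠ ξ := by intro h; rw [h, ha0] at hη; exact lt_irrefl 0 hη
  obtain ⟨D, hDc, hDd⟩ := TopologicalSpace.exists_countable_dense C(E, ℝ)
  haveI : Countable ↥D := hDc.to_subtype
  have key : ∀ᵐ X ∂Pi, ∀ (f : D) (g : D) (n : ℕ),
      a η ξ * (pairM ((X ξ : Measure E).tilted ((n : ℝ) • (g : C(E, ℝ)))) (f : C(E, ℝ))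
          - pairM (X ξ : Measure E) (f : C(E, ℝ)))
        = a ξ η * (pairM ((X η : Measure E).tilted (f : C(E, ℝ))) ((n : ℝ) • (g : C(E, ℝ)))
          - pairM (X η : Measure E) ((n : ℝ) • (g : C(E, ℝ)))) := by
    rw [ae_all_iff]; intro f; rw [ae_all_iff]; intro g; rw [ae_all_iff]; intro n
    exact hsym η ξ hne f ((n : ℝ) • g)
  filter_upwards [key] with X hX
  set μ : Measure E := (X ξ : Measure E) with hμ
  haveI : IsProbabilityMeasure μ := (X ξ).2
  haveI : IsProbabilityMeasure ((X η : Measure E)) := (X η).2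
  refine dirac_of_pairing μ D hDd hDc ?_
  intro g hg f hf
  -- probability instances for tilted measures
  have htiltProb : ∀ (ν : Measure E) [IsProbabilityMeasure ν] (h : C(E, ℝ)),
      IsProbabilityMeasure (ν.tilted h) := fun ν _ h =>
    isProbabilityMeasure_tilted (cont_int ν (continuous_exp.comp h.continuous))
  -- the scaled identities
  have hXn := fun n => hX ⟨f, hf⟩ ⟨g, hg⟩ n
  simp only [pairM_smul] at hXn
  set c : ℝ := a ξ η * (pairM ((X η : Measure E).tilted ⇑f) ⇑g
    - pairM (X η : Measure E) ⇑g) with hc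
  set L : ℕ → ℝ := fun n =>
    pairM (μ.tilted ((n : ℝ) • (g : C(E, ℝ)))) f - pairM μ f with hL
  have hXn' : ∀ n : ℕ, a η ξ * L n = (n : ℝ) * c := by
    intro n
    have h : a η ξ * L n = a ξ η * ((n : ℝ) * pairM ((X η : Measure E).tilted ⇑f) ⇑g
        - (n : ℝ) * pairM (X η : Measure E) ⇑g) := hXn n
    rw [h, hc]; ring
  have hL1 : ∀ n : ℕ, a η ξ * L n = (n : ℝ) * (a η ξ * L 1) := by
    intro n
    rw [hXn' n, hXn' 1]
    push_cast
    ring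
  have hbound : ∀ n : ℕ, |L n| ≤ 2 * ‖f‖ := by
    intro n
    haveI := htiltProb μ ((n : ℝ) • (g : C(E, ℝ)))
    have b1 := pair_bound (μ.tilted ((n : ℝ) • (g : C(E, ℝ)) : C(E, ℝ))) f
    have b2 := pair_bound μ f
    calc |L n| ≤ |pairM (μ.tilted ((n : ℝ) • (g : C(E, ℝ)))) f| + |pairM μ f| := abs_sub _ _
      _ ≤ ‖f‖ + ‖f‖ := add_le_add b1 b2
      _ = 2 * ‖f‖ := by ring
  have hzero : a η ξ * L 1 = 0 := by
    by_contra h0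
    obtain ⟨n, hn⟩ := exists_nat_gt ((a η ξ * (2 * ‖f‖)) / |a η ξ * L 1|)
    have h1 : a η ξ * |L n| ≤ a η ξ * (2 * ‖f‖) :=
      mul_le_mul_of_nonneg_left (hbound n) (le_of_lt hη)
    have h2 : |a η ξ * L n| = (n : ℝ) * |a η ξ * L 1| := by
      rw [hL1 n, abs_mul, abs_of_nonneg (by positivity : (0:ℝ) ≤ (n:ℝ))]
    have h3 : (n : ℝ) * |a η ξ * L 1| ≤ a η ξ * (2 * ‖f‖) := by
      rw [← h2, abs_mul, abs_of_nonneg (le_of_lt hη)]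
      exact h1
    have h4 : (0:ℝ) < |a η ξ * L 1| := abs_pos.mpr h0
    have h6 : a η ξ * (2 * ‖f‖) < (n : ℝ) * |a η ξ * L 1| := by
      rwa [div_lt_iff₀ h4] at hn
    linarith
  have hL1zero : L 1 = 0 := by
    rcases mul_eq_zero.mp hzero with h | h
    · exact absurd h (ne_of_gt hη)
    · exact h
  have hfin : pairM (μ.tilted ⇑g) ⇑f - pairM μ ⇑f = 0 := by
    have h' := hL1zero
    simp only [hL, Nat.cast_one, one_smul] at h'
    exact h'
  show pairM (μ.tilted ⇑g) ⇑f = pairM μ ⇑f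
  linarith [hfin]

end
end

section
/- Let E be a compact metric space, I a countable set, a : I × I → [0,∞) with a(ξ,ξ) = 0 and Σ_{ξ'} a(ξ,ξ') = 1, ρ > 0, r ≥ 0, A : C(E) → C(E) a continuous linear operator satisfying the positive maximum principle (if f ∈ C(E) attains a nonnegative maximum at x then Af(x) ≤ 0), and η a Markov kernel from E² to E. Let Π be a probability measure on M₁(E)^I, let ξ ∈ I, and suppose that Π-almost surely X_{ξ'} = δ_{x_{ξ'}} is a Dirac measure for ξ' = ξ and for every ξ' with a(ξ,ξ') > 0, and that for all f, g ∈ C(E): ∫ g(x_ξ) [ ρ Σ_{ξ' ≠ ξ} a(ξ,ξ') (f(x_{ξ'}) − f(x_ξ)) + Af(x_ξ) + r( ∫ f(u) η(x_ξ, x_ξ; du) − f(x_ξ) ) ] Π(dX) = 0. Then for every ξ' ∈ I with a(ξ,ξ') > 0, one has x_ξ = x_{ξ'} Π-almost surely. -/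
open MeasureTheory Real ProbabilityTheory Filter Topology

noncomputable section

lemma aux_measurable_tsum {α ι : Type*} [MeasurableSpace α] [Countable ι] {F : ι → α → ℝ}
    (hF : ∀ i, Measurable (F i)) (hs : ∀ y, Summable fun i => F i y) :
    Measurable fun y => ∑' i, F i y := by
  refine measurable_of_tendsto_metrizable'
    (f := fun s : Finset ι => fun y => ∑ i ∈ s, F i y) atTop
    (fun s => s.measurable_sum fun i _ => hF i) ?_
  rw [tendsto_pi_nhds]
  intro y
  exact (hs y).hasSum

lemma aux_integrable_of_bound {α : Type*} [MeasurableSpace α] (μ : Measure α)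
    [IsFiniteMeasure μ] {f : α → ℝ} (hm : Measurable f) (C : ℝ) (hb : ∀ y, |f y| ≤ C) :
    Integrable f μ :=
  Integrable.mono' (integrable_const C) hm.aestronglyMeasurable
    (ae_of_all _ fun y => by simpa [Real.norm_eq_abs] using hb y)

lemma aux_pmp_gamma {E : Type*} [TopologicalSpace E] (A : C(E, ℝ) →L[ℝ] C(E, ℝ))
    (hPMP : ∀ (f : C(E, ℝ)) (x₀ : E), (∀ y, f y ≤ f x₀) → 0 ≤ f x₀ → A f x₀ ≤ 0)
    (f : C(E, ℝ)) (x₀ : E) :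
    0 ≤ A (f * f) x₀ - 2 * f x₀ * A f x₀ := by
  set c := f x₀ with hc
  have h1 : A 1 x₀ ≤ 0 := hPMP 1 x₀ (fun y => le_rfl) (by norm_num)
  set g : C(E, ℝ) := (f - c • (1 : C(E, ℝ))) * (f - c • (1 : C(E, ℝ))) with hg
  have hgy : ∀ y, g y = (f y - c) * (f y - c) := by
    intro y; simp [hg]
  have hg0 : g x₀ = 0 := by rw [hgy]; simp [hc]
  have hkey : A (-g) x₀ ≤ 0 := by
    refine hPMP (-g) x₀ (fun y => ?_) ?_
    · simp only [ContinuousMap.neg_apply, hg0, neg_zero]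
      have := mul_self_nonneg (f y - c)
      rw [← hgy y] at this
      linarith
    · simp [hg0]
  have h2 : 0 ≤ A g x₀ := by
    rw [map_neg] at hkey
    simpa using hkey
  have hexp : g = f * f - (2 * c) • f + (c ^ 2) • (1 : C(E, ℝ)) := by
    ext y
    simp [hg]
    ring
  rw [hexp] at h2
  simp only [map_add, map_sub, _root_.map_smul, ContinuousMap.add_apply, ContinuousMap.sub_apply,
    ContinuousMap.smul_apply, ContinuousMap.one_apply, smul_eq_mul, mul_one] at h2
  nlinarith [sq_nonneg c]

/-- Let `E` be compact metric, `I` countable, `a` a migration matrix, `ρ > 0`,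
`r ≥ 0`, `A` a continuous linear operator on `C(E)` satisfying the positive maximum principle,
and `η` a Markov kernel from `E²` to `E`.  Suppose `Π`-a.s. the coordinates `X_ξ` and `X_{ξ'}`
(for all `ξ'` with `a(ξ,ξ') > 0`) are the Dirac measures `δ_{x_ξ}`, `δ_{x_{ξ'}}`, and that for
all `f, g ∈ C(E)`:
`∫ g(x_ξ)[ρ Σ_{ξ'} a(ξ,ξ')(f(x_{ξ'}) − f(x_ξ)) + Af(x_ξ) + r(∫ f dη(x_ξ,x_ξ) − f(x_ξ))] dΠ = 0`.
Then for every `ξ'` with `a(ξ,ξ') > 0`, `x_ξ = x_{ξ'}` `Π`-a.s. -/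
theorem dirac_coordinates_agree
    {E : Type*} [MetricSpace E] [CompactSpace E] [MeasurableSpace E] [BorelSpace E]
    {I : Type*} [Countable I]
    (a : I → I → ℝ) (ha0 : ∀ ξ, a ξ ξ = 0) (hapos : ∀ ξ ξ', 0 ≤ a ξ ξ')
    (harow : ∀ ξ, HasSum (a ξ) 1)
    (ρ r : ℝ) (hρ : 0 < ρ) (hr : 0 ≤ r)
    (A : C(E, ℝ) →L[ℝ] C(E, ℝ))
    (hPMP : ∀ (f : C(E, ℝ)) (x₀ : E), (∀ y, f y ≤ f x₀) → 0 ≤ f x₀ → A f x₀ ≤ 0)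
    (η : Kernel (E × E) E) [IsMarkovKernel η]
    (Pi : Measure (I → ProbabilityMeasure E)) [IsProbabilityMeasure Pi]
    (ξ : I)
    (x : (I → ProbabilityMeasure E) → I → E) (hxmeas : ∀ ζ, Measurable fun X => x X ζ)
    (hdirac : ∀ᵐ X ∂Pi, (X ξ : Measure E) = Measure.dirac (x X ξ) ∧
      ∀ ξ' : I, 0 < a ξ ξ' → (X ξ' : Measure E) = Measure.dirac (x X ξ'))
    (hident : ∀ f g : C(E, ℝ),
      (∫ X, g (x X ξ) *
          (ρ * (∑' ξ' : I, a ξ ξ' * (f (x X ξ') - f (x X ξ)))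
            + A f (x X ξ)
            + r * ((∫ u, f u ∂(η (x X ξ, x X ξ))) - f (x X ξ))) ∂Pi) = 0) :
    ∀ ξ' : I, 0 < a ξ ξ' → ∀ᵐ X ∂Pi, x X ξ = x X ξ' := by
  intro ξ' hξ'
  classical
  have hasum : Summable (a ξ) := (harow ξ).summable
  have hfb : ∀ (f : C(E, ℝ)) (y : E), |f y| ≤ ‖f‖ := fun f y => by
    simpa [Real.norm_eq_abs] using f.norm_coe_le_norm y
  have hterm_le : ∀ (f : C(E, ℝ)) (X : I → ProbabilityMeasure E) (ζ : I),
      |a ξ ζ * (f (x X ζ) - f (x X ξ))| ≤ a ξ ζ * (2 * ‖f‖) := by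
    intro f X ζ
    rw [abs_mul, abs_of_nonneg (hapos ξ ζ)]
    refine mul_le_mul_of_nonneg_left ?_ (hapos ξ ζ)
    have h1 := abs_le.mp (hfb f (x X ζ))
    have h2 := abs_le.mp (hfb f (x X ξ))
    rw [abs_le]
    constructor <;> linarith [h1.1, h1.2, h2.1, h2.2]
  have hSummable : ∀ (f : C(E, ℝ)) (X : I → ProbabilityMeasure E),
      Summable (fun ζ => a ξ ζ * (f (x X ζ) - f (x X ξ))) := by
    intro f X
    refine Summable.of_norm_bounded (hasum.mul_right (2 * ‖f‖))
      (fun ζ => ?_)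
    rw [Real.norm_eq_abs]
    exact hterm_le f X ζ
  have htsum_bdd : ∀ (f : C(E, ℝ)) (X : I → ProbabilityMeasure E),
      |∑' ζ : I, a ξ ζ * (f (x X ζ) - f (x X ξ))| ≤ 2 * ‖f‖ := by
    intro f X
    calc |∑' ζ : I, a ξ ζ * (f (x X ζ) - f (x X ξ))|
        ≤ ∑' ζ : I, |a ξ ζ * (f (x X ζ) - f (x X ξ))| := by
          simpa only [Real.norm_eq_abs] using
            norm_tsum_le_tsum_norm (f := fun ζ => a ξ ζ * (f (x X ζ) - f (x X ξ)))
              (by simpa only [Real.norm_eq_abs] using (hSummable f X).abs)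
      _ ≤ ∑' ζ : I, a ξ ζ * (2 * ‖f‖) :=
          Summable.tsum_le_tsum (hterm_le f X) (hSummable f X).abs (hasum.mul_right _)
      _ = (∑' ζ : I, a ξ ζ) * (2 * ‖f‖) := tsum_mul_right
      _ = 2 * ‖f‖ := by rw [(harow ξ).tsum_eq]; ring
  have hker_bdd : ∀ (f : C(E, ℝ)) (p : E × E), |∫ u, f u ∂η p| ≤ ‖f‖ := by
    intro f p
    calc |∫ u, f u ∂η p| ≤ ‖f‖ * ((η p) Set.univ).toReal := by
          have := norm_integral_le_of_norm_le_const (μ := η p) (f := fun u : E => f u)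
            (C := ‖f‖) (ae_of_all _ fun u => by rw [Real.norm_eq_abs]; exact hfb f u)
          simpa only [Real.norm_eq_abs, measureReal_def] using this
      _ = ‖f‖ := by simp [measure_univ]
  have hmeasf : ∀ (f : C(E, ℝ)) (ζ : I), Measurable (fun X => f (x X ζ)) :=
    fun f ζ => f.continuous.measurable.comp (hxmeas ζ)
  have hmeas_ker : ∀ f : C(E, ℝ), Measurable (fun X => ∫ u, f u ∂η (x X ξ, x X ξ)) := by
    intro f
    have h1 : StronglyMeasurable (fun p : E × E => ∫ u, f u ∂η p) := by
      simpa using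
        MeasureTheory.StronglyMeasurable.integral_kernel_prod_right' (κ := η)
          (f := fun q : (E × E) × E => f q.2)
          ((f.continuous.comp continuous_snd).stronglyMeasurable)
    exact h1.measurable.comp ((hxmeas ξ).prodMk (hxmeas ξ))
  set Φ : C(E, ℝ) → (I → ProbabilityMeasure E) → ℝ := fun f X =>
    ρ * (∑' ζ : I, a ξ ζ * (f (x X ζ) - f (x X ξ))) + A f (x X ξ)
      + r * ((∫ u, f u ∂η (x X ξ, x X ξ)) - f (x X ξ)) with hΦdef
  have hIdent : ∀ f g : C(E, ℝ), (∫ X, g (x X ξ) * Φ f X ∂Pi) = 0 := fun f g => hident f g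
  have hmeasΦ : ∀ f : C(E, ℝ), Measurable (Φ f) := by
    intro f
    have h1 : Measurable fun X => ∑' ζ : I, a ξ ζ * (f (x X ζ) - f (x X ξ)) :=
      aux_measurable_tsum
        (fun ζ => measurable_const.mul ((hmeasf f ζ).sub (hmeasf f ξ)))
        (fun X => hSummable f X)
    exact ((measurable_const.mul h1).add
      ((A f).continuous.measurable.comp (hxmeas ξ))).add
      (measurable_const.mul ((hmeas_ker f).sub (hmeasf f ξ)))
  have hbddΦ : ∀ (f : C(E, ℝ)) (X : I → ProbabilityMeasure E),
      |Φ f X| ≤ ρ * (2 * ‖f‖) + ‖A f‖ + r * (2 * ‖f‖) := by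
    intro f X
    have h1 := htsum_bdd f X
    have h2 := hfb (A f) (x X ξ)
    have h3 := abs_le.mp (hker_bdd f (x X ξ, x X ξ))
    have h4 := abs_le.mp (hfb f (x X ξ))
    have h5 : |(∫ u, f u ∂η (x X ξ, x X ξ)) - f (x X ξ)| ≤ 2 * ‖f‖ := by
      rw [abs_le]; constructor <;> linarith [h3.1, h3.2, h4.1, h4.2]
    have h6 : |ρ * (∑' ζ : I, a ξ ζ * (f (x X ζ) - f (x X ξ)))| ≤ ρ * (2 * ‖f‖) := by
      rw [abs_mul, abs_of_nonneg hρ.le]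
      exact mul_le_mul_of_nonneg_left h1 hρ.le
    have h7 : |r * ((∫ u, f u ∂η (x X ξ, x X ξ)) - f (x X ξ))| ≤ r * (2 * ‖f‖) := by
      rw [abs_mul, abs_of_nonneg hr]
      exact mul_le_mul_of_nonneg_left h5 hr
    calc |Φ f X| ≤ |ρ * (∑' ζ : I, a ξ ζ * (f (x X ζ) - f (x X ξ))) + A f (x X ξ)|
          + |r * ((∫ u, f u ∂η (x X ξ, x X ξ)) - f (x X ξ))| := abs_add_le _ _
      _ ≤ ρ * (2 * ‖f‖) + ‖A f‖ + r * (2 * ‖f‖) := by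
          have := abs_add_le (ρ * (∑' ζ : I, a ξ ζ * (f (x X ζ) - f (x X ξ)))) (A f (x X ξ))
          linarith
  have hintΦ : ∀ f g : C(E, ℝ), Integrable (fun X => g (x X ξ) * Φ f X) Pi := by
    intro f g
    refine aux_integrable_of_bound Pi ((hmeasf g ξ).mul (hmeasΦ f))
      (‖g‖ * (ρ * (2 * ‖f‖) + ‖A f‖ + r * (2 * ‖f‖))) (fun X => ?_)
    rw [abs_mul]
    exact mul_le_mul (hfb g _) (hbddΦ f X) (abs_nonneg _) (norm_nonneg g)
  -- key step: every continuous function agrees a.e. at the two coordinates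
  have key : ∀ f : C(E, ℝ), ∀ᵐ X ∂Pi, f (x X ξ') = f (x X ξ) := by
    intro f
    set F : (I → ProbabilityMeasure E) → ℝ := fun X =>
      (1 : C(E, ℝ)) (x X ξ) * Φ (f * f) X - ((2 : ℝ) • f) (x X ξ) * Φ f X with hFdef
    have hFint : Integrable F Pi := (hintΦ (f * f) 1).sub (hintΦ f ((2 : ℝ) • f))
    have hFzero : ∫ X, F X ∂Pi = 0 := by
      rw [hFdef]
      rw [integral_sub (hintΦ (f * f) 1) (hintΦ f ((2 : ℝ) • f)),
        hIdent (f * f) 1, hIdent f ((2 : ℝ) • f), sub_zero]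
    set S : (I → ProbabilityMeasure E) → ℝ := fun X =>
      ρ * (a ξ ξ' * (f (x X ξ') - f (x X ξ)) ^ 2) with hSdef
    have hSnonneg : ∀ X, 0 ≤ S X :=
      fun X => mul_nonneg hρ.le (mul_nonneg (hapos ξ ξ') (sq_nonneg _))
    have hSmeas : Measurable S :=
      measurable_const.mul (measurable_const.mul
        (((hmeasf f ξ').sub (hmeasf f ξ)).pow_const 2))
    have hSbdd : ∀ X, |S X| ≤ ρ * (a ξ ξ' * (2 * ‖f‖) ^ 2) := by
      intro X
      rw [abs_of_nonneg (hSnonneg X)]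
      have h1 := abs_le.mp (hfb f (x X ξ'))
      have h2 := abs_le.mp (hfb f (x X ξ))
      have hd : (f (x X ξ') - f (x X ξ)) ^ 2 ≤ (2 * ‖f‖) ^ 2 := by
        have := sq_le_sq' (by linarith [h1.1, h2.2] : -(2 * ‖f‖) ≤ f (x X ξ') - f (x X ξ))
          (by linarith [h1.2, h2.1] : f (x X ξ') - f (x X ξ) ≤ 2 * ‖f‖)
        simpa using this
      exact mul_le_mul_of_nonneg_left
        (mul_le_mul_of_nonneg_left hd (hapos ξ ξ')) hρ.le
    have hSint : Integrable S Pi := aux_integrable_of_bound Pi hSmeas _ hSbdd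
    -- pointwise inequality S ≤ F
    have hle : ∀ X, S X ≤ F X := by
      intro X
      have hsum2 := hSummable f X
      have hsum1 := hSummable (f * f) X
      have hsum3 : Summable (fun ζ => a ξ ζ * (f (x X ζ) - f (x X ξ)) ^ 2) := by
        refine (hsum1.sub (hsum2.mul_left (2 * f (x X ξ)))).congr fun ζ => ?_
        simp only [ContinuousMap.mul_apply]
        ring
      have hcomb : (∑' ζ : I, a ξ ζ * ((f * f) (x X ζ) - (f * f) (x X ξ)))
          - 2 * f (x X ξ) * (∑' ζ : I, a ξ ζ * (f (x X ζ) - f (x X ξ)))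
          = ∑' ζ : I, a ξ ζ * (f (x X ζ) - f (x X ξ)) ^ 2 := by
        rw [← tsum_mul_left, ← Summable.tsum_sub hsum1 (hsum2.mul_left (2 * f (x X ξ)))]
        refine tsum_congr fun ζ => ?_
        simp only [ContinuousMap.mul_apply]
        ring
      have hterm : a ξ ξ' * (f (x X ξ') - f (x X ξ)) ^ 2
          ≤ ∑' ζ : I, a ξ ζ * (f (x X ζ) - f (x X ξ)) ^ 2 :=
        Summable.le_tsum hsum3 ξ' (fun ζ _ => mul_nonneg (hapos ξ ζ) (sq_nonneg _))
      have hgam := aux_pmp_gamma A hPMP f (x X ξ)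
      have hi1 : Integrable (fun u => f u) (η (x X ξ, x X ξ)) :=
        aux_integrable_of_bound _ f.continuous.measurable ‖f‖ (hfb f)
      have hi2 : Integrable (fun u => f u * f u) (η (x X ξ, x X ξ)) :=
        aux_integrable_of_bound _ (f.continuous.measurable.mul f.continuous.measurable)
          (‖f‖ * ‖f‖) (fun y => by
            rw [abs_mul]
            exact mul_le_mul (hfb f y) (hfb f y) (abs_nonneg _) (norm_nonneg f))
      have hηexp : ∫ u, (f u - f (x X ξ)) ^ 2 ∂η (x X ξ, x X ξ)
          = (∫ u, f u * f u ∂η (x X ξ, x X ξ))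
            - 2 * f (x X ξ) * (∫ u, f u ∂η (x X ξ, x X ξ)) + f (x X ξ) ^ 2 := by
        have e : ∀ u : E, (f u - f (x X ξ)) ^ 2
            = f u * f u - 2 * f (x X ξ) * f u + f (x X ξ) ^ 2 := fun u => by ring
        have hInt3 : Integrable (fun u => f u * f u - 2 * f (x X ξ) * f u)
            (η (x X ξ, x X ξ)) := hi2.sub (hi1.const_mul _)
        simp_rw [e]
        rw [integral_add hInt3 (integrable_const _),
          integral_sub hi2 (hi1.const_mul _), integral_const_mul, integral_const]
        simp [measure_univ]
      have hηnn : 0 ≤ ∫ u, (f u - f (x X ξ)) ^ 2 ∂η (x X ξ, x X ξ) :=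
        integral_nonneg fun u => sq_nonneg _
      have hFX : F X = ρ * (∑' ζ : I, a ξ ζ * (f (x X ζ) - f (x X ξ)) ^ 2)
          + (A (f * f) (x X ξ) - 2 * f (x X ξ) * A f (x X ξ))
          + r * (∫ u, (f u - f (x X ξ)) ^ 2 ∂η (x X ξ, x X ξ)) := by
        have hffx : (f * f) (x X ξ) = f (x X ξ) ^ 2 := by
          simp [ContinuousMap.mul_apply, sq]
        have hII : (∫ u, (f * f) u ∂η (x X ξ, x X ξ))
            = ∫ u, f u * f u ∂η (x X ξ, x X ξ) := by
          simp only [ContinuousMap.mul_apply]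
        rw [hFdef]
        simp only [ContinuousMap.one_apply, one_mul, ContinuousMap.smul_apply, smul_eq_mul,
          hΦdef]
        rw [hηexp, ← hcomb, hffx, hII]
        ring
      simp only [hSdef]
      rw [hFX]
      have h6 := mul_le_mul_of_nonneg_left hterm hρ.le
      have h7 := mul_nonneg hr hηnn
      linarith
    have hSle : ∫ X, S X ∂Pi ≤ ∫ X, F X ∂Pi := integral_mono hSint hFint hle
    have hS0 : ∫ X, S X ∂Pi = 0 :=
      le_antisymm (by rw [← hFzero]; exact hSle) (integral_nonneg hSnonneg)
    have hae : S =ᵐ[Pi] 0 :=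
      (integral_eq_zero_iff_of_nonneg_ae (ae_of_all _ hSnonneg) hSint).mp hS0
    filter_upwards [hae] with X hX
    have hX' : ρ * (a ξ ξ' * (f (x X ξ') - f (x X ξ)) ^ 2) = 0 := by
      simpa [hSdef] using hX
    have hd2 : (f (x X ξ') - f (x X ξ)) ^ 2 = 0 := by
      rcases mul_eq_zero.mp hX' with h | h
      · exact absurd h (ne_of_gt hρ)
      rcases mul_eq_zero.mp h with h' | h'
      · exact absurd h' (ne_of_gt hξ')
      · exact h'
    have := sq_eq_zero_iff.mp hd2
    linarith [sub_eq_zero.mp this]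
  -- conclude using a countable dense set
  obtain ⟨s, hsc, hsd⟩ := TopologicalSpace.exists_countable_dense E
  haveI := hsc.to_subtype
  have hall : ∀ᵐ X ∂Pi, ∀ z : s, dist (x X ξ') (z : E) = dist (x X ξ) (z : E) := by
    rw [ae_all_iff]
    intro z
    have := key ⟨fun y => dist y (z : E), Continuous.dist continuous_id continuous_const⟩
    simpa using this
  filter_upwards [hall] with X hX
  have hlt : ∀ ε : ℝ, 0 < ε → dist (x X ξ) (x X ξ') < ε := by
    intro ε hε
    obtain ⟨z, hzball, hzs⟩ := Metric.dense_iff.mp hsd (x X ξ) (ε / 2) (by linarith)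
    have h1 : dist (x X ξ) z < ε / 2 := by
      rw [Metric.mem_ball] at hzball
      rwa [dist_comm]
    have h2 := hX ⟨z, hzs⟩
    calc dist (x X ξ) (x X ξ') ≤ dist (x X ξ) z + dist z (x X ξ') := dist_triangle _ _ _
      _ = dist (x X ξ) z + dist (x X ξ') z := by rw [dist_comm z]
      _ = dist (x X ξ) z + dist (x X ξ) z := by rw [h2]
      _ < ε := by linarith
  have h0 : dist (x X ξ) (x X ξ') ≤ 0 := by
    by_contra h'
    push_neg at h'
    exact lt_irrefl _ (hlt _ h')
  exact eq_of_dist_eq_zero (le_antisymm h0 dist_nonneg)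

end
end

section
/- Let E be a compact metric space, I a countable set, a : I × I → [0,∞) with a(ξ,ξ) = 0 and Σ_{ξ'} a(ξ,ξ') = 1, A : C(E) → C(E) a continuous linear operator, V : E² → ℝ bounded symmetric measurable, η a Markov kernel from E² to E, s, r, ρ ≥ 0, and let L be the interacting Fleming–Viot generator on the algebra 𝒜 of polynomials. For monomials Φ(X) = ∏_{i=1}^m ⟨X_{ξ_i}, f_i⟩ and Ψ(X) = ∏_{j=1}^n ⟨X_{η_j}, g_j⟩ with all f_i, g_j ∈ C(E), the carré du champ Γ(Φ,Ψ) := ½(L(ΦΨ) − Φ LΨ − Ψ LΦ) satisfies, for every X ∈ M₁(E)^I, Γ(Φ,Ψ)(X) = ½ Σ_{ξ∈I} ( ⟨X_ξ, D_ξΦ(X) · D_ξΨ(X)⟩ − ⟨X_ξ, D_ξΦ(X)⟩ ⟨X_ξ, D_ξΨ(X)⟩ ), where D_ξΦ(X)(u) := Σ_{i : ξ_i = ξ} f_i(u) ∏_{j ≠ i} ⟨X_{ξ_j}, f_j⟩ and similarly for D_ξΨ(X). -/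
open MeasureTheory Real ProbabilityTheory

noncomputable section

variable {E : Type*} [MetricSpace E] [CompactSpace E] [MeasurableSpace E] [BorelSpace E]
variable {I : Type*}

/-- Tilting a probability measure by a continuous function, as a probability measure:
`μ^h(dv) = e^{h v} μ(dv) / ⟨μ, e^h⟩`. -/
def ptilt (μ : ProbabilityMeasure E) (h : C(E, ℝ)) : ProbabilityMeasure E :=
  ⟨(μ : Measure E).tilted h,
    isProbabilityMeasure_tilted
      ((Real.continuous_exp.comp h.continuous).integrable_of_hasCompactSupport
        (HasCompactSupport.of_compactSpace _))⟩

/-- A monomial `X ↦ ∏ᵢ ⟨X_{ξᵢ}, fᵢ⟩` on `M₁(E)^I`. -/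
def monomial {ι : Type*} [Fintype ι] (ξ : ι → I) (f : ι → C(E, ℝ))
    (X : I → ProbabilityMeasure E) : ℝ :=
  ∏ i, pairM (X (ξ i) : Measure E) (f i)

/-- The action of the interacting Fleming-Viot generator on the monomial with data `(ξ, f)`:
`Σᵢ ⟨b_{ξᵢ}(X), fᵢ⟩∏_{j≠i}⟨X_{ξⱼ}, fⱼ⟩ + Σ_{i<k, ξᵢ=ξ_k}(⟨X_{ξᵢ}, fᵢf_k⟩ −
⟨X_{ξᵢ}, fᵢ⟩⟨X_{ξ_k}, f_k⟩)∏_{j≠i,k}⟨X_{ξⱼ}, fⱼ⟩` (the sum over unordered pairs is written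
as half the sum over ordered pairs of distinct indices). -/
def LGen {ι : Type*} [Fintype ι] [DecidableEq ι] [DecidableEq I]
    (a : I → I → ℝ) (A : C(E, ℝ) →L[ℝ] C(E, ℝ)) (V : E → E → ℝ)
    (η : Kernel (E × E) E) (s r ρ : ℝ) (ξ : ι → I) (f : ι → C(E, ℝ))
    (X : I → ProbabilityMeasure E) : ℝ :=
  (∑ i, bPair a A V η s r ρ (fun ζ => (X ζ : Measure E)) (ξ i) (f i) *
      ∏ j ∈ Finset.univ.erase i, pairM (X (ξ j) : Measure E) (f j))
  + (1/2) * ∑ i, ∑ k ∈ Finset.univ.erase i,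
      (if ξ i = ξ k then
        (pairM (X (ξ i) : Measure E) (fun u => f i u * f k u)
            - pairM (X (ξ i) : Measure E) (f i) * pairM (X (ξ k) : Measure E) (f k)) *
          ∏ j ∈ (Finset.univ.erase i).erase k, pairM (X (ξ j) : Measure E) (f j)
      else 0)

/-- The linear operator `L` agrees with the interacting Fleming-Viot generator on all
monomials; together with linearity this determines `L` on the algebra `𝒜` of polynomials. -/
def IsFVGenerator [DecidableEq I] (a : I → I → ℝ) (A : C(E, ℝ) →L[ℝ] C(E, ℝ))
    (V : E → E → ℝ) (η : Kernel (E × E) E) (s r ρ : ℝ)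
    (L : ((I → ProbabilityMeasure E) → ℝ) →ₗ[ℝ] ((I → ProbabilityMeasure E) → ℝ)) : Prop :=
  ∀ (m : ℕ) (ξ : Fin m → I) (f : Fin m → C(E, ℝ)),
    L (monomial ξ f) = LGen a A V η s r ρ ξ f

/-- The algebra `𝒜` of polynomials: the linear span of the monomials. -/
def polyAlg (E : Type*) [MetricSpace E] [CompactSpace E] [MeasurableSpace E] [BorelSpace E]
    (I : Type*) : Submodule ℝ ((I → ProbabilityMeasure E) → ℝ) :=
  Submodule.span ℝ {F | ∃ (m : ℕ) (ξ : Fin m → I) (f : Fin m → C(E, ℝ)), F = monomial ξ f}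

/-- Reversibility of `Π` with respect to `L`: `∫ LΦ·Ψ dΠ = ∫ LΨ·Φ dΠ` for all `Φ, Ψ ∈ 𝒜`. -/
def IsReversible (L : ((I → ProbabilityMeasure E) → ℝ) →ₗ[ℝ] ((I → ProbabilityMeasure E) → ℝ))
    (P : Measure (I → ProbabilityMeasure E)) : Prop :=
  ∀ Φ ∈ polyAlg E I, ∀ Ψ ∈ polyAlg E I,
    ∫ X, L Φ X * Ψ X ∂P = ∫ X, L Ψ X * Φ X ∂P

/-- `D_ξΦ(X)(u) = Σ_{i : ξᵢ = ζ} fᵢ(u) ∏_{j≠i} ⟨X_{ξⱼ}, fⱼ⟩`, the coordinate derivative of a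
monomial. -/
def Dmono {ι : Type*} [Fintype ι] [DecidableEq ι] [DecidableEq I]
    (ξ : ι → I) (f : ι → C(E, ℝ)) (X : I → ProbabilityMeasure E) (ζ : I) : E → ℝ :=
  fun u => ∑ i, if ξ i = ζ then
    f i u * ∏ j ∈ Finset.univ.erase i, pairM (X (ξ j) : Measure E) (f j) else 0

/-- The carré du champ `Γ(Φ,Ψ) = ½(L(ΦΨ) − Φ·LΨ − Ψ·LΦ)`. -/
def carre (L : ((I → ProbabilityMeasure E) → ℝ) →ₗ[ℝ] ((I → ProbabilityMeasure E) → ℝ))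
    (Φ Ψ : (I → ProbabilityMeasure E) → ℝ) (X : I → ProbabilityMeasure E) : ℝ :=
  (1/2) * (L (fun Y => Φ Y * Ψ Y) X - Φ X * L Ψ X - Ψ X * L Φ X)


lemma disjSum_erase_inl' {α β : Type*} [DecidableEq α] [DecidableEq β]
    (s : Finset α) (t : Finset β) (i : α) :
    (s.disjSum t).erase (Sum.inl i) = (s.erase i).disjSum t := by
  ext x; cases x <;> simp [Finset.mem_erase, and_comm]

lemma disjSum_erase_inr' {α β : Type*} [DecidableEq α] [DecidableEq β]
    (s : Finset α) (t : Finset β) (k : β) :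
    (s.disjSum t).erase (Sum.inr k) = s.disjSum (t.erase k) := by
  ext x; cases x <;> simp [Finset.mem_erase, and_comm]

lemma cont_integrable {E : Type*} [MetricSpace E] [CompactSpace E] [MeasurableSpace E]
    [BorelSpace E] (μ : Measure E) [IsProbabilityMeasure μ] {h : E → ℝ} (hc : Continuous h) :
    Integrable h μ :=
  hc.integrable_of_hasCompactSupport (HasCompactSupport.of_compactSpace _)

lemma pairM_finsum {E : Type*} [MetricSpace E] [CompactSpace E] [MeasurableSpace E]
    [BorelSpace E] {ι : Type*} (μ : Measure E) [IsProbabilityMeasure μ] (s : Finset ι)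
    (c : ι → ℝ) (h : ι → C(E,ℝ)) :
    pairM μ (fun u => ∑ i ∈ s, c i * h i u) = ∑ i ∈ s, c i * pairM μ (h i) := by
  unfold pairM
  rw [integral_finset_sum]
  · exact Finset.sum_congr rfl fun i _ => by rw [integral_const_mul]
  · exact fun i _ => (cont_integrable μ (continuous_const.mul (h i).continuous))

lemma pairM_finsum_mul {E : Type*} [MetricSpace E] [CompactSpace E] [MeasurableSpace E]
    [BorelSpace E] {ι κ : Type*} (μ : Measure E) [IsProbabilityMeasure μ]
    (s : Finset ι) (t : Finset κ) (c : ι → ℝ) (d : κ → ℝ) (h : ι → C(E,ℝ)) (p : κ → C(E,ℝ)) :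
    pairM μ (fun u => (∑ i ∈ s, c i * h i u) * (∑ k ∈ t, d k * p k u))
      = ∑ i ∈ s, ∑ k ∈ t, (c i * d k) * pairM μ (fun u => h i u * p k u) := by
  unfold pairM
  have : ∀ u, (∑ i ∈ s, c i * h i u) * (∑ k ∈ t, d k * p k u)
      = ∑ i ∈ s, ∑ k ∈ t, (c i * d k) * (h i u * p k u) := by
    intro u
    rw [Finset.sum_mul_sum]
    exact Finset.sum_congr rfl fun i _ => Finset.sum_congr rfl fun k _ => by ring
  simp only [this]
  rw [integral_finset_sum _ (fun i _ => ?_)]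
  · refine Finset.sum_congr rfl fun i _ => ?_
    rw [integral_finset_sum _ (fun k _ => ?_)]
    · exact Finset.sum_congr rfl fun k _ => by rw [integral_const_mul]
    · exact cont_integrable μ (continuous_const.mul (((h i).continuous).mul ((p k).continuous)))
  · apply integrable_finset_sum
    intro k _
    exact cont_integrable μ (continuous_const.mul (((h i).continuous).mul ((p k).continuous)))

/-- For monomials `Φ(X) = ∏ᵢ⟨X_{ξᵢ}, fᵢ⟩` and `Ψ(X) = ∏ⱼ⟨X_{ηⱼ}, gⱼ⟩`,
the carré du champ `Γ(Φ,Ψ) = ½(L(ΦΨ) − Φ·LΨ − Ψ·LΦ)` of the interacting Fleming-Viot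
generator satisfies
`Γ(Φ,Ψ)(X) = ½ Σ_ζ (⟨X_ζ, D_ζΦ·D_ζΨ⟩ − ⟨X_ζ, D_ζΦ⟩⟨X_ζ, D_ζΨ⟩)`. -/
theorem carre_du_champ_monomial
    [Countable I] [DecidableEq I]
    (a : I → I → ℝ) (ha0 : ∀ ξ, a ξ ξ = 0) (hapos : ∀ ξ ξ', 0 ≤ a ξ ξ')
    (harow : ∀ ξ, HasSum (a ξ) 1)
    (A : C(E, ℝ) →L[ℝ] C(E, ℝ))
    (V : E → E → ℝ) (hVsymm : ∀ u v, V u v = V v u)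
    (hVmeas : Measurable fun p : E × E => V p.1 p.2) (hVbdd : ∃ C : ℝ, ∀ u v, |V u v| ≤ C)
    (κ : Kernel (E × E) E) [IsMarkovKernel κ]
    (s r ρ : ℝ) (hs : 0 ≤ s) (hr : 0 ≤ r) (hρ : 0 ≤ ρ)
    (m n : ℕ) (ξ : Fin m → I) (f : Fin m → C(E, ℝ)) (ηs : Fin n → I) (g : Fin n → C(E, ℝ))
    (X : I → ProbabilityMeasure E) :
    (1/2) * (LGen a A V κ s r ρ (Sum.elim ξ ηs) (Sum.elim f g) X
        - monomial ξ f X * LGen a A V κ s r ρ ηs g X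
        - monomial ηs g X * LGen a A V κ s r ρ ξ f X)
      = (1/2) * ∑' ζ : I,
          (pairM (X ζ : Measure E) (fun u => Dmono ξ f X ζ u * Dmono ηs g X ζ u)
            - pairM (X ζ : Measure E) (Dmono ξ f X ζ)
              * pairM (X ζ : Measure E) (Dmono ηs g X ζ)) := by
  classical
  -- abbreviate the cross-term sum
  have h1 : ∑ i : Fin m, bPair a A V κ s r ρ (fun ζ => (X ζ : Measure E)) (ξ i) (f i) *
        ((∏ j ∈ Finset.univ.erase i, pairM (X (ξ j) : Measure E) (f j)) *
          ∏ l : Fin n, pairM (X (ηs l) : Measure E) (g l))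
      = (∑ i : Fin m, bPair a A V κ s r ρ (fun ζ => (X ζ : Measure E)) (ξ i) (f i) *
          ∏ j ∈ Finset.univ.erase i, pairM (X (ξ j) : Measure E) (f j)) *
        ∏ l : Fin n, pairM (X (ηs l) : Measure E) (g l) := by
    rw [Finset.sum_mul]; exact Finset.sum_congr rfl fun i _ => by ring
  have h2 : ∑ k : Fin n, bPair a A V κ s r ρ (fun ζ => (X ζ : Measure E)) (ηs k) (g k) *
        ((∏ j : Fin m, pairM (X (ξ j) : Measure E) (f j)) *
          ∏ l ∈ Finset.univ.erase k, pairM (X (ηs l) : Measure E) (g l))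
      = (∏ j : Fin m, pairM (X (ξ j) : Measure E) (f j)) *
        ∑ k : Fin n, bPair a A V κ s r ρ (fun ζ => (X ζ : Measure E)) (ηs k) (g k) *
          ∏ l ∈ Finset.univ.erase k, pairM (X (ηs l) : Measure E) (g l) := by
    rw [Finset.mul_sum]; exact Finset.sum_congr rfl fun k _ => by ring
  have h3 : ∑ i : Fin m, ∑ i' ∈ Finset.univ.erase i,
        (if ξ i = ξ i' then
          ((pairM (X (ξ i) : Measure E) fun u => f i u * f i' u)
              - pairM (X (ξ i) : Measure E) (f i) * pairM (X (ξ i') : Measure E) (f i')) *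
            ((∏ j ∈ (Finset.univ.erase i).erase i', pairM (X (ξ j) : Measure E) (f j)) *
              ∏ l : Fin n, pairM (X (ηs l) : Measure E) (g l))
        else 0)
      = (∑ i : Fin m, ∑ i' ∈ Finset.univ.erase i,
          (if ξ i = ξ i' then
            ((pairM (X (ξ i) : Measure E) fun u => f i u * f i' u)
                - pairM (X (ξ i) : Measure E) (f i) * pairM (X (ξ i') : Measure E) (f i')) *
              ∏ j ∈ (Finset.univ.erase i).erase i', pairM (X (ξ j) : Measure E) (f j)
          else 0)) * ∏ l : Fin n, pairM (X (ηs l) : Measure E) (g l) := by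
    rw [Finset.sum_mul]
    refine Finset.sum_congr rfl fun i _ => ?_
    rw [Finset.sum_mul]
    exact Finset.sum_congr rfl fun i' _ => by split_ifs <;> ring
  have h4 : ∑ k : Fin n, ∑ k' ∈ Finset.univ.erase k,
        (if ηs k = ηs k' then
          ((pairM (X (ηs k) : Measure E) fun u => g k u * g k' u)
              - pairM (X (ηs k) : Measure E) (g k) * pairM (X (ηs k') : Measure E) (g k')) *
            ((∏ j : Fin m, pairM (X (ξ j) : Measure E) (f j)) *
              ∏ l ∈ (Finset.univ.erase k).erase k', pairM (X (ηs l) : Measure E) (g l))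
        else 0)
      = (∏ j : Fin m, pairM (X (ξ j) : Measure E) (f j)) *
        ∑ k : Fin n, ∑ k' ∈ Finset.univ.erase k,
          (if ηs k = ηs k' then
            ((pairM (X (ηs k) : Measure E) fun u => g k u * g k' u)
                - pairM (X (ηs k) : Measure E) (g k) * pairM (X (ηs k') : Measure E) (g k')) *
              ∏ l ∈ (Finset.univ.erase k).erase k', pairM (X (ηs l) : Measure E) (g l)
          else 0) := by
    rw [Finset.mul_sum]
    refine Finset.sum_congr rfl fun k _ => ?_
    rw [Finset.mul_sum]
    exact Finset.sum_congr rfl fun k' _ => by split_ifs <;> ring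
  have h5 : ∑ k : Fin n, ∑ i : Fin m,
        (if ηs k = ξ i then
          ((pairM (X (ηs k) : Measure E) fun u => g k u * f i u)
              - pairM (X (ηs k) : Measure E) (g k) * pairM (X (ξ i) : Measure E) (f i)) *
            ((∏ j ∈ Finset.univ.erase i, pairM (X (ξ j) : Measure E) (f j)) *
              ∏ l ∈ Finset.univ.erase k, pairM (X (ηs l) : Measure E) (g l))
        else 0)
      = ∑ i : Fin m, ∑ k : Fin n,
        (if ξ i = ηs k then
          ((pairM (X (ξ i) : Measure E) fun u => f i u * g k u)
              - pairM (X (ξ i) : Measure E) (f i) * pairM (X (ηs k) : Measure E) (g k)) *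
            ((∏ j ∈ Finset.univ.erase i, pairM (X (ξ j) : Measure E) (f j)) *
              ∏ l ∈ Finset.univ.erase k, pairM (X (ηs l) : Measure E) (g l))
        else 0) := by
    rw [Finset.sum_comm]
    refine Finset.sum_congr rfl fun i _ => Finset.sum_congr rfl fun k _ => ?_
    by_cases h : ξ i = ηs k
    · rw [if_pos h.symm, if_pos h, h,
        show (fun u => g k u * f i u) = fun u => f i u * g k u from funext fun u => mul_comm _ _]
      ring
    · rw [if_neg fun hh => h hh.symm, if_neg h]
  have hL : LGen a A V κ s r ρ (Sum.elim ξ ηs) (Sum.elim f g) X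
      - monomial ξ f X * LGen a A V κ s r ρ ηs g X
      - monomial ηs g X * LGen a A V κ s r ρ ξ f X
      = ∑ i : Fin m, ∑ k : Fin n,
        (if ξ i = ηs k then
          ((pairM (X (ξ i) : Measure E) fun u => f i u * g k u)
            - pairM (X (ξ i) : Measure E) (f i) * pairM (X (ηs k) : Measure E) (g k)) *
          ((∏ j ∈ Finset.univ.erase i, pairM (X (ξ j) : Measure E) (f j)) *
           (∏ l ∈ Finset.univ.erase k, pairM (X (ηs l) : Measure E) (g l)))
        else 0) := by
    simp only [LGen, monomial]
    rw [show (Finset.univ : Finset (Fin m ⊕ Fin n))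
        = Finset.univ.disjSum Finset.univ from (Finset.univ_disjSum_univ).symm]
    simp only [Finset.sum_disjSum, Finset.prod_disjSum, disjSum_erase_inl',
      disjSum_erase_inr', Sum.elim_inl, Sum.elim_inr]
    simp only [Finset.sum_add_distrib]
    rw [h1, h2, h3, h4, h5]
    ring
  -- the right-hand side
  have key : ∀ ζ : I,
      pairM (X ζ : Measure E) (fun u => Dmono ξ f X ζ u * Dmono ηs g X ζ u)
        - pairM (X ζ : Measure E) (Dmono ξ f X ζ) * pairM (X ζ : Measure E) (Dmono ηs g X ζ)
      = ∑ i : Fin m, ∑ k : Fin n,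
        (if ξ i = ζ ∧ ηs k = ζ then
          ((pairM (X (ξ i) : Measure E) fun u => f i u * g k u)
            - pairM (X (ξ i) : Measure E) (f i) * pairM (X (ηs k) : Measure E) (g k)) *
          ((∏ j ∈ Finset.univ.erase i, pairM (X (ξ j) : Measure E) (f j)) *
           (∏ l ∈ Finset.univ.erase k, pairM (X (ηs l) : Measure E) (g l)))
        else 0) := by
    intro ζ
    have e1 : Dmono ξ f X ζ = fun u => ∑ i : Fin m,
        (if ξ i = ζ then ∏ j ∈ Finset.univ.erase i, pairM (X (ξ j) : Measure E) (f j) else 0)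
          * f i u := by
      funext u
      exact Finset.sum_congr rfl fun i _ => by split_ifs <;> ring
    have e2 : Dmono ηs g X ζ = fun u => ∑ k : Fin n,
        (if ηs k = ζ then ∏ l ∈ Finset.univ.erase k, pairM (X (ηs l) : Measure E) (g l) else 0)
          * g k u := by
      funext u
      exact Finset.sum_congr rfl fun k _ => by split_ifs <;> ring
    have hmul : pairM (X ζ : Measure E) (fun u => Dmono ξ f X ζ u * Dmono ηs g X ζ u)
        = ∑ i : Fin m, ∑ k : Fin n,
          ((if ξ i = ζ then ∏ j ∈ Finset.univ.erase i, pairM (X (ξ j) : Measure E) (f j) else 0)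
            * (if ηs k = ζ then ∏ l ∈ Finset.univ.erase k, pairM (X (ηs l) : Measure E) (g l) else 0))
            * pairM (X ζ : Measure E) (fun u => f i u * g k u) := by
      rw [show (fun u => Dmono ξ f X ζ u * Dmono ηs g X ζ u)
          = fun u => (∑ i : Fin m,
              (if ξ i = ζ then ∏ j ∈ Finset.univ.erase i, pairM (X (ξ j) : Measure E) (f j) else 0)
                * f i u) *
            (∑ k : Fin n,
              (if ηs k = ζ then ∏ l ∈ Finset.univ.erase k, pairM (X (ηs l) : Measure E) (g l) else 0)
                * g k u)
          from funext fun u => by rw [e1, e2]]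
      exact pairM_finsum_mul (X ζ : Measure E) Finset.univ Finset.univ _ _ f g
    have hone : pairM (X ζ : Measure E) (Dmono ξ f X ζ)
        = ∑ i : Fin m,
          (if ξ i = ζ then ∏ j ∈ Finset.univ.erase i, pairM (X (ξ j) : Measure E) (f j) else 0)
            * pairM (X ζ : Measure E) (f i) := by
      rw [e1]; exact pairM_finsum (X ζ : Measure E) Finset.univ _ f
    have htwo : pairM (X ζ : Measure E) (Dmono ηs g X ζ)
        = ∑ k : Fin n,
          (if ηs k = ζ then ∏ l ∈ Finset.univ.erase k, pairM (X (ηs l) : Measure E) (g l) else 0)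
            * pairM (X ζ : Measure E) (g k) := by
      rw [e2]; exact pairM_finsum (X ζ : Measure E) Finset.univ _ g
    rw [hmul, hone, htwo, Finset.sum_mul_sum, ← Finset.sum_sub_distrib]
    refine Finset.sum_congr rfl fun i _ => ?_
    rw [← Finset.sum_sub_distrib]
    refine Finset.sum_congr rfl fun k _ => ?_
    by_cases hh1 : ξ i = ζ
    · subst hh1
      by_cases hh2 : ηs k = ξ i
      · rw [if_pos rfl, if_pos hh2, if_pos ⟨rfl, hh2⟩, hh2]
        ring
      · rw [if_pos rfl, if_neg hh2,
          if_neg (show ¬(ξ i = ξ i ∧ ηs k = ξ i) from fun hc => hh2 hc.2)]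
        ring
    · rw [if_neg hh1, if_neg (show ¬(ξ i = ζ ∧ ηs k = ζ) from fun hc => hh1 hc.1)]
      ring
  have hR : (∑' ζ : I,
        (pairM (X ζ : Measure E) (fun u => Dmono ξ f X ζ u * Dmono ηs g X ζ u)
          - pairM (X ζ : Measure E) (Dmono ξ f X ζ)
            * pairM (X ζ : Measure E) (Dmono ηs g X ζ)))
      = ∑ i : Fin m, ∑ k : Fin n,
        (if ξ i = ηs k then
          ((pairM (X (ξ i) : Measure E) fun u => f i u * g k u)
            - pairM (X (ξ i) : Measure E) (f i) * pairM (X (ηs k) : Measure E) (g k)) *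
          ((∏ j ∈ Finset.univ.erase i, pairM (X (ξ j) : Measure E) (f j)) *
           (∏ l ∈ Finset.univ.erase k, pairM (X (ηs l) : Measure E) (g l)))
        else 0) := by
    rw [tsum_congr key]
    rw [Summable.tsum_finsetSum (fun i _ => ?_)]
    · refine Finset.sum_congr rfl fun i _ => ?_
      rw [Summable.tsum_finsetSum (fun k _ => ?_)]
      · refine Finset.sum_congr rfl fun k _ => ?_
        by_cases h : ξ i = ηs k
        · rw [if_pos h, tsum_eq_single (ξ i) (fun ζ hζ => if_neg fun hc => hζ hc.1.symm),
            if_pos ⟨rfl, h.symm⟩]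
        · rw [if_neg h]
          have : ∀ ζ : I, (if ξ i = ζ ∧ ηs k = ζ then
              ((pairM (X (ξ i) : Measure E) fun u => f i u * g k u)
                - pairM (X (ξ i) : Measure E) (f i) * pairM (X (ηs k) : Measure E) (g k)) *
              ((∏ j ∈ Finset.univ.erase i, pairM (X (ξ j) : Measure E) (f j)) *
               (∏ l ∈ Finset.univ.erase k, pairM (X (ηs l) : Measure E) (g l)))
            else 0) = 0 := fun ζ => if_neg fun hc => h (hc.1.trans hc.2.symm)
          simp only [this, tsum_zero]
      · refine summable_of_ne_finset_zero (s := {ξ i}) fun ζ hζ => ?_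
        exact if_neg fun hc => hζ (by simp [← hc.1])
    · refine summable_of_ne_finset_zero (s := {ξ i}) fun ζ hζ => ?_
      refine Finset.sum_eq_zero fun k _ => ?_
      exact if_neg fun hc => hζ (by simp [← hc.1])
  rw [hL, hR]

end
end

section
/- In the setting of the interacting Fleming–Viot generator L on the algebra 𝒜 of polynomials, a Borel probability measure Π on M₁(E)^I is reversible with respect to L (meaning ∫ LΦ · Ψ dΠ = ∫ LΨ · Φ dΠ for all Φ, Ψ ∈ 𝒜) if and only if for every monomial Φ ∈ 𝒜, every ξ ∈ I, and every f ∈ C(E): −½ ∫ ( ⟨X_ξ, D_ξΦ(X) · f⟩ − ⟨X_ξ, D_ξΦ(X)⟩ ⟨X_ξ, f⟩ ) Π(dX) = ∫ Φ(X) ⟨b_ξ(X), f⟩ Π(dX), where D_ξΦ(X)(u) := Σ_{i : ξ_i = ξ} f_i(u) ∏_{j ≠ i} ⟨X_{ξ_j}, f_j⟩ for Φ(X) = ∏_{i=1}^m ⟨X_{ξ_i}, f_i⟩. -/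
open MeasureTheory Real ProbabilityTheory
open Filter

noncomputable section
set_option linter.unusedSectionVars false
set_option maxHeartbeats 1000000

variable {E : Type*} [MetricSpace E] [CompactSpace E] [MeasurableSpace E] [BorelSpace E]
variable {I : Type*}

namespace FVAux

variable {E : Type*} [MetricSpace E] [CompactSpace E] [MeasurableSpace E] [BorelSpace E]
variable {I : Type*}

/-- The identity kernel on probability measures. -/
def idk (E : Type*) [MeasurableSpace E] : Kernel (ProbabilityMeasure E) E where
  toFun := fun μ => (μ : Measure E)
  measurable' := measurable_subtype_coe

@[simp] lemma idk_apply (μ : ProbabilityMeasure E) : idk E μ = (μ : Measure E) := rfl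

instance : IsMarkovKernel (idk E : Kernel (ProbabilityMeasure E) E) := ⟨fun μ => μ.2⟩

lemma measurable_integral_pm {g : E → ℝ} (hg : Measurable g) :
    Measurable fun μ : ProbabilityMeasure E => ∫ x, g x ∂(μ : Measure E) := by
  have h := MeasureTheory.StronglyMeasurable.integral_kernel_prod_right'
    (κ := idk E) (f := fun p : ProbabilityMeasure E × E => g p.2)
    ((hg.comp measurable_snd).stronglyMeasurable)
  simpa using h.measurable

lemma measurable_integral_pm2 {g : E × E → ℝ} (hg : Measurable g) :
    Measurable fun μ : ProbabilityMeasure E => ∫ p, g p ∂((μ : Measure E).prod (μ : Measure E)) := by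
  have h := MeasureTheory.StronglyMeasurable.integral_kernel_prod_right'
    (κ := (idk E) ×ₖ (idk E)) (f := fun p : ProbabilityMeasure E × (E × E) => g p.2)
    ((hg.comp measurable_snd).stronglyMeasurable)
  simpa [Kernel.prod_apply, idk_apply] using h.measurable

lemma integrable_of_bdd {α : Type*} [MeasurableSpace α] {μ : Measure α} [IsFiniteMeasure μ]
    {g : α → ℝ} (hm : AEStronglyMeasurable g μ) {C : ℝ} (hC : ∀ x, |g x| ≤ C) :
    Integrable g μ :=
  (integrable_const C).mono' hm (ae_of_all _ fun x => by simpa [Real.norm_eq_abs] using hC x)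

lemma abs_pairM_le (μ : ProbabilityMeasure E) {g : E → ℝ} {C : ℝ} (hC : ∀ x, |g x| ≤ C) :
    |pairM (μ : Measure E) g| ≤ C := by
  have h := norm_integral_le_of_norm_le_const (μ := (μ : Measure E)) (f := g) (C := C)
    (ae_of_all _ fun x => by simpa [Real.norm_eq_abs] using hC x)
  simpa [pairM, Real.norm_eq_abs] using h

lemma measurable_tsum' {ι α : Type*} [Countable ι] [MeasurableSpace α] {f : ι → α → ℝ}
    (hf : ∀ i, Measurable (f i)) (hsum : ∀ x, Summable fun i => f i x) :
    Measurable fun x => ∑' i, f i x := by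
  refine measurable_of_tendsto_metrizable' (atTop : Filter (Finset ι))
    (f := fun s x => ∑ i ∈ s, f i x) (fun s => Finset.measurable_sum _ fun i _ => hf i) ?_
  rw [tendsto_pi_nhds]
  exact fun x => (hsum x).hasSum

end FVAux

namespace FVAux
variable {E : Type*} [MetricSpace E] [CompactSpace E] [MeasurableSpace E] [BorelSpace E]
variable {I : Type*}

/-- A bounded measurable function on `M₁(E)^I`. -/
def Nice (F : (I → ProbabilityMeasure E) → ℝ) : Prop :=
  Measurable F ∧ ∃ C : ℝ, ∀ X, |F X| ≤ C

lemma Nice.add {F G : (I → ProbabilityMeasure E) → ℝ} (hF : Nice F) (hG : Nice G) :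
    Nice (fun X => F X + G X) := by
  obtain ⟨mF, CF, hCF⟩ := hF; obtain ⟨mG, CG, hCG⟩ := hG
  exact ⟨mF.add mG, CF + CG, fun X => (abs_add_le _ _).trans (add_le_add (hCF X) (hCG X))⟩

lemma Nice.neg {F : (I → ProbabilityMeasure E) → ℝ} (hF : Nice F) : Nice (fun X => -F X) := by
  obtain ⟨mF, CF, hCF⟩ := hF
  exact ⟨mF.neg, CF, fun X => by simpa using hCF X⟩

lemma Nice.sub {F G : (I → ProbabilityMeasure E) → ℝ} (hF : Nice F) (hG : Nice G) :
    Nice (fun X => F X - G X) := by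
  simpa [sub_eq_add_neg] using hF.add hG.neg

lemma Nice.mul {F G : (I → ProbabilityMeasure E) → ℝ} (hF : Nice F) (hG : Nice G) :
    Nice (fun X => F X * G X) := by
  obtain ⟨mF, CF, hCF⟩ := hF; obtain ⟨mG, CG, hCG⟩ := hG
  refine ⟨mF.mul mG, CF * CG, fun X => ?_⟩
  rw [abs_mul]
  exact mul_le_mul (hCF X) (hCG X) (abs_nonneg _) ((abs_nonneg _).trans (hCF X))

lemma Nice.const (c : ℝ) : Nice (fun _ : I → ProbabilityMeasure E => c) :=
  ⟨measurable_const, |c|, fun _ => le_rfl⟩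

lemma Nice.const_mul {F : (I → ProbabilityMeasure E) → ℝ} (hF : Nice F) (c : ℝ) :
    Nice (fun X => c * F X) := (Nice.const c).mul hF

lemma Nice.sum {ι : Type*} {s : Finset ι} {F : ι → (I → ProbabilityMeasure E) → ℝ}
    (h : ∀ i ∈ s, Nice (F i)) : Nice (fun X => ∑ i ∈ s, F i X) := by
  classical
  induction s using Finset.induction_on with
  | empty => simpa using Nice.const 0
  | @insert a t hns ih =>
    simp only [Finset.sum_insert hns]
    exact (h a (Finset.mem_insert_self a t)).add
      (ih fun i hi => h i (Finset.mem_insert_of_mem hi))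

lemma Nice.prod {ι : Type*} {s : Finset ι} {F : ι → (I → ProbabilityMeasure E) → ℝ}
    (h : ∀ i ∈ s, Nice (F i)) : Nice (fun X => ∏ i ∈ s, F i X) := by
  classical
  induction s using Finset.induction_on with
  | empty => simpa using Nice.const 1
  | @insert a t hns ih =>
    simp only [Finset.prod_insert hns]
    exact (h a (Finset.mem_insert_self a t)).mul
      (ih fun i hi => h i (Finset.mem_insert_of_mem hi))

lemma Nice.ite {c : Prop} [Decidable c] {F : (I → ProbabilityMeasure E) → ℝ} (hF : Nice F) :
    Nice (fun X => if c then F X else 0) := by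
  by_cases h : c
  · simpa only [if_pos h]
  · simpa only [if_neg h] using Nice.const 0

lemma Nice.integrable {F : (I → ProbabilityMeasure E) → ℝ} (hF : Nice F)
    (P : Measure (I → ProbabilityMeasure E)) [IsFiniteMeasure P] : Integrable F P := by
  obtain ⟨mF, CF, hCF⟩ := hF
  exact integrable_of_bdd mF.aestronglyMeasurable hCF

lemma nice_pairCM (ζ : I) (g : C(E, ℝ)) :
    Nice (fun X : I → ProbabilityMeasure E => pairM (X ζ : Measure E) g) :=
  ⟨(measurable_integral_pm g.continuous.measurable).comp (measurable_pi_apply ζ),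
   ‖g‖, fun X => abs_pairM_le _ fun x => by
    simpa [Real.norm_eq_abs] using g.norm_coe_le_norm x⟩

lemma nice_pairCM_mul (ζ : I) (g h : C(E, ℝ)) :
    Nice (fun X : I → ProbabilityMeasure E => pairM (X ζ : Measure E) (fun u => g u * h u)) := by
  have : (fun u => g u * h u) = ⇑(g * h) := by ext u; simp
  rw [this]; exact nice_pairCM ζ (g * h)

end FVAux

namespace FVAux
variable {E : Type*} [MetricSpace E] [CompactSpace E] [MeasurableSpace E] [BorelSpace E]
variable {I : Type*}

lemma abs_integral_le {α : Type*} [MeasurableSpace α] (μ : Measure α) [IsProbabilityMeasure μ]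
    {g : α → ℝ} {C : ℝ} (hC : ∀ x, |g x| ≤ C) : |∫ x, g x ∂μ| ≤ C := by
  have h := norm_integral_le_of_norm_le_const (μ := μ) (f := g) (C := C)
    (ae_of_all _ fun x => by simpa [Real.norm_eq_abs] using hC x)
  simpa [Real.norm_eq_abs] using h

lemma pm_prod_eq (μ : ProbabilityMeasure E) {h : E × E → ℝ} (hm : Measurable h) {C : ℝ}
    (hC : ∀ p, |h p| ≤ C) :
    ∫ u, ∫ v, h (u, v) ∂(μ : Measure E) ∂(μ : Measure E)
      = ∫ p, h p ∂((μ : Measure E).prod (μ : Measure E)) :=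
  (MeasureTheory.integral_prod h (integrable_of_bdd hm.aestronglyMeasurable hC)).symm

lemma nice_selPair (V : E → E → ℝ) (hVmeas : Measurable fun p : E × E => V p.1 p.2)
    {CV : ℝ} (hVbdd : ∀ u v, |V u v| ≤ CV) (ζ : I) (f : C(E, ℝ)) :
    Nice (fun X : I → ProbabilityMeasure E => selPair V (X ζ : Measure E) f) := by
  set C := max CV 0 with hC
  have hV' : ∀ u v, |V u v| ≤ C := fun u v => (hVbdd u v).trans (le_max_left _ _)
  have hf' : ∀ x, |f x| ≤ ‖f‖ := fun x => by
    simpa [Real.norm_eq_abs] using f.norm_coe_le_norm x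
  have hmul : Measurable fun p : E × E => V p.1 p.2 * f p.1 :=
    hVmeas.mul (f.continuous.measurable.comp measurable_fst)
  have hbd : ∀ p : E × E, |V p.1 p.2 * f p.1| ≤ C * ‖f‖ := fun p => by
    rw [abs_mul]
    exact mul_le_mul (hV' _ _) (hf' _) (abs_nonneg _) (le_max_right _ _)
  have key : ∀ μ : ProbabilityMeasure E, selPair V (μ : Measure E) f =
      (∫ p, V p.1 p.2 * f p.1 ∂((μ : Measure E).prod (μ : Measure E)))
        - (∫ u, f u ∂(μ : Measure E)) *
          (∫ p, V p.1 p.2 ∂((μ : Measure E).prod (μ : Measure E))) := by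
    intro μ
    rw [selPair]
    congr 1
    · rw [← pm_prod_eq μ hmul hbd]
      exact integral_congr_ae (ae_of_all _ fun u => (integral_mul_const (f u) _).symm)
    · congr 1
      exact pm_prod_eq μ hVmeas fun p => hV' p.1 p.2
  constructor
  · have m1 : Measurable fun μ : ProbabilityMeasure E =>
        ∫ p, V p.1 p.2 * f p.1 ∂((μ : Measure E).prod (μ : Measure E)) :=
      measurable_integral_pm2 hmul
    have m2 : Measurable fun μ : ProbabilityMeasure E =>
        ∫ p, V p.1 p.2 ∂((μ : Measure E).prod (μ : Measure E)) :=
      measurable_integral_pm2 hVmeas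
    have m3 : Measurable fun μ : ProbabilityMeasure E => ∫ u, f u ∂(μ : Measure E) :=
      measurable_integral_pm f.continuous.measurable
    have : Measurable fun μ : ProbabilityMeasure E => selPair V (μ : Measure E) f := by
      simp only [key]
      exact m1.sub (m3.mul m2)
    exact this.comp (measurable_pi_apply ζ)
  · refine ⟨C * ‖f‖ + ‖f‖ * C, fun X => ?_⟩
    simp only [key]
    refine (abs_sub _ _).trans (add_le_add ?_ ?_)
    · exact abs_integral_le _ hbd
    · rw [abs_mul]
      exact mul_le_mul (abs_integral_le _ hf') (abs_integral_le _ fun p => hV' p.1 p.2)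
        (abs_nonneg _) (norm_nonneg _)

lemma nice_recPair (κ : Kernel (E × E) E) [IsMarkovKernel κ] (ζ : I) (f : C(E, ℝ)) :
    Nice (fun X : I → ProbabilityMeasure E => recPair κ (X ζ : Measure E) f) := by
  have hf' : ∀ x, |f x| ≤ ‖f‖ := fun x => by
    simpa [Real.norm_eq_abs] using f.norm_coe_le_norm x
  have hg2m : Measurable fun p : E × E => ∫ z, f z ∂κ p := by
    have h := MeasureTheory.StronglyMeasurable.integral_kernel_prod_right'
      (κ := κ) (f := fun q : (E × E) × E => f q.2)
      ((f.continuous.measurable.comp measurable_snd).stronglyMeasurable)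
    exact h.measurable
  have hg2b : ∀ p : E × E, |∫ z, f z ∂κ p| ≤ ‖f‖ := fun p => abs_integral_le _ hf'
  have key : ∀ μ : ProbabilityMeasure E, recPair κ (μ : Measure E) f =
      (∫ p, (∫ z, f z ∂κ p) ∂((μ : Measure E).prod (μ : Measure E)))
        - ∫ z, f z ∂(μ : Measure E) := by
    intro μ
    rw [recPair]
    congr 1
    exact pm_prod_eq μ hg2m hg2b
  constructor
  · have : Measurable fun μ : ProbabilityMeasure E => recPair κ (μ : Measure E) f := by
      simp only [key]
      exact (measurable_integral_pm2 hg2m).sub (measurable_integral_pm f.continuous.measurable)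
    exact this.comp (measurable_pi_apply ζ)
  · refine ⟨‖f‖ + ‖f‖, fun X => ?_⟩
    simp only [key]
    exact (abs_sub _ _).trans (add_le_add (abs_integral_le _ hg2b) (abs_integral_le _ hf'))

lemma nice_migr [Countable I] (a : I → I → ℝ) (hapos : ∀ ξ ξ', 0 ≤ a ξ ξ')
    (harow : ∀ ξ, HasSum (a ξ) 1) (ζ : I) (f : C(E, ℝ)) :
    Nice (fun X : I → ProbabilityMeasure E =>
      ∑' ξ' : I, a ζ ξ' * (pairM (X ξ' : Measure E) f - pairM (X ζ : Measure E) f)) := by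
  have hterm : ∀ (ξ' : I) (X : I → ProbabilityMeasure E),
      |a ζ ξ' * (pairM (X ξ' : Measure E) f - pairM (X ζ : Measure E) f)|
        ≤ a ζ ξ' * (2 * ‖f‖) := by
    intro ξ' X
    rw [abs_mul, abs_of_nonneg (hapos ζ ξ')]
    refine mul_le_mul_of_nonneg_left ?_ (hapos ζ ξ')
    have h1 : |pairM (X ξ' : Measure E) f| ≤ ‖f‖ := abs_pairM_le _ fun x => by
      simpa [Real.norm_eq_abs] using f.norm_coe_le_norm x
    have h2 : |pairM (X ζ : Measure E) f| ≤ ‖f‖ := abs_pairM_le _ fun x => by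
      simpa [Real.norm_eq_abs] using f.norm_coe_le_norm x
    calc |pairM (X ξ' : Measure E) f - pairM (X ζ : Measure E) f|
        ≤ |pairM (X ξ' : Measure E) f| + |pairM (X ζ : Measure E) f| := abs_sub _ _
      _ ≤ ‖f‖ + ‖f‖ := add_le_add h1 h2
      _ = 2 * ‖f‖ := by ring
  have hsummaj : Summable fun ξ' => a ζ ξ' * (2 * ‖f‖) := (harow ζ).summable.mul_right _
  have hsum : ∀ X : I → ProbabilityMeasure E, Summable fun ξ' =>
      a ζ ξ' * (pairM (X ξ' : Measure E) f - pairM (X ζ : Measure E) f) := by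
    intro X
    refine Summable.of_norm_bounded hsummaj fun ξ' => ?_
    simpa only [Real.norm_eq_abs] using hterm ξ' X
  constructor
  · refine measurable_tsum' (fun ξ' => ?_) hsum
    exact (((nice_pairCM ξ' f).sub (nice_pairCM ζ f)).const_mul (a ζ ξ')).1
  · refine ⟨2 * ‖f‖, fun X => ?_⟩
    have h := tsum_of_norm_bounded
      (f := fun ξ' => a ζ ξ' * (pairM (X ξ' : Measure E) f - pairM (X ζ : Measure E) f))
      ((harow ζ).mul_right (2 * ‖f‖)) (fun ξ' => by
        simpa only [Real.norm_eq_abs] using hterm ξ' X)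
    simpa only [Real.norm_eq_abs, one_mul] using h

lemma nice_bPair [Countable I] (a : I → I → ℝ) (hapos : ∀ ξ ξ', 0 ≤ a ξ ξ')
    (harow : ∀ ξ, HasSum (a ξ) 1) (A : C(E, ℝ) →L[ℝ] C(E, ℝ)) (V : E → E → ℝ)
    (hVmeas : Measurable fun p : E × E => V p.1 p.2) {CV : ℝ} (hVbdd : ∀ u v, |V u v| ≤ CV)
    (κ : Kernel (E × E) E) [IsMarkovKernel κ] (s r ρ : ℝ) (ζ : I) (f : C(E, ℝ)) :
    Nice (fun X : I → ProbabilityMeasure E =>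
      bPair a A V κ s r ρ (fun w => (X w : Measure E)) ζ f) := by
  unfold bPair
  exact (((nice_pairCM ζ (A f)).add
      ((nice_migr a hapos harow ζ f).const_mul ρ)).add
      ((nice_selPair V hVmeas hVbdd ζ f).const_mul s)).add
      ((nice_recPair κ ζ f).const_mul r)

end FVAux

namespace FVAux
variable {E : Type*} [MetricSpace E] [CompactSpace E] [MeasurableSpace E] [BorelSpace E]
variable {I : Type*}

/-- The two-monomial carré du champ. -/
def Gam2 {ι κI : Type*} [Fintype ι] [DecidableEq ι] [Fintype κI] [DecidableEq κI] [DecidableEq I]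
    (ξ : ι → I) (f : ι → C(E, ℝ)) (ξ' : κI → I) (f' : κI → C(E, ℝ))
    (X : I → ProbabilityMeasure E) : ℝ :=
  ∑ i, ∑ k, (if ξ i = ξ' k then
      (pairM (X (ξ i) : Measure E) (fun u => f i u * f' k u)
        - pairM (X (ξ i) : Measure E) (f i) * pairM (X (ξ' k) : Measure E) (f' k)) *
      ((∏ j ∈ Finset.univ.erase i, pairM (X (ξ j) : Measure E) (f j)) *
       (∏ l ∈ Finset.univ.erase k, pairM (X (ξ' l) : Measure E) (f' l)))
    else 0)

section Reindex
variable {ι ι' : Type*} [Fintype ι] [DecidableEq ι] [Fintype ι'] [DecidableEq ι']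

lemma prod_erase_equiv (e : ι' ≃ ι) (p : ι → ℝ) (i : ι') :
    ∏ j ∈ Finset.univ.erase (e i), p j = ∏ j ∈ Finset.univ.erase i, p (e j) := by
  rw [← Finset.map_univ_equiv e]
  rw [show (e i) = e.toEmbedding i from rfl, ← Finset.map_erase, Finset.prod_map]
  rfl

lemma sum_erase_equiv (e : ι' ≃ ι) (p : ι → ℝ) (i : ι') :
    ∑ j ∈ Finset.univ.erase (e i), p j = ∑ j ∈ Finset.univ.erase i, p (e j) := by
  rw [← Finset.map_univ_equiv e]
  rw [show (e i) = e.toEmbedding i from rfl, ← Finset.map_erase, Finset.sum_map]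
  rfl

lemma prod_erase_erase_equiv (e : ι' ≃ ι) (p : ι → ℝ) (i k : ι') :
    ∏ j ∈ (Finset.univ.erase (e i)).erase (e k),
      p j = ∏ j ∈ (Finset.univ.erase i).erase k, p (e j) := by
  rw [← Finset.map_univ_equiv e]
  rw [show (e i) = e.toEmbedding i from rfl, show (e k) = e.toEmbedding k from rfl,
    ← Finset.map_erase, ← Finset.map_erase, Finset.prod_map]
  rfl

lemma monomial_reindex (e : ι' ≃ ι) (ξ : ι → I) (f : ι → C(E, ℝ)) :
    monomial (ξ ∘ e) (f ∘ e) = monomial ξ f := by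
  funext X
  exact Fintype.prod_equiv e _ _ fun i => rfl

lemma LGen_reindex [DecidableEq I] (e : ι' ≃ ι) (a : I → I → ℝ) (A : C(E, ℝ) →L[ℝ] C(E, ℝ))
    (V : E → E → ℝ) (η : Kernel (E × E) E) (s r ρ : ℝ) (ξ : ι → I) (f : ι → C(E, ℝ)) :
    LGen a A V η s r ρ (ξ ∘ e) (f ∘ e) = LGen a A V η s r ρ ξ f := by
  funext X
  unfold LGen
  congr 1
  · refine Fintype.sum_equiv e _ _ fun i => ?_
    rw [prod_erase_equiv e]
    rfl
  · congr 1
    refine Fintype.sum_equiv e _ _ fun i => ?_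
    rw [sum_erase_equiv e]
    refine Finset.sum_congr rfl fun k _ => ?_
    rw [prod_erase_erase_equiv e]
    rfl

lemma Gam2_reindex_left [DecidableEq I] {κI : Type*} [Fintype κI] [DecidableEq κI]
    (e : ι' ≃ ι) (ξ : ι → I) (f : ι → C(E, ℝ)) (ξ' : κI → I) (f' : κI → C(E, ℝ)) :
    Gam2 (ξ ∘ e) (f ∘ e) ξ' f' = Gam2 ξ f ξ' f' := by
  funext X
  unfold Gam2
  refine Fintype.sum_equiv e _ _ fun i => ?_
  refine Finset.sum_congr rfl fun k _ => ?_
  rw [prod_erase_equiv e]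
  rfl

end Reindex

section DisjSum
variable {ι κI : Type*} [Fintype ι] [DecidableEq ι] [Fintype κI] [DecidableEq κI]

lemma erase_disjSum_inl (s : Finset ι) (t : Finset κI) (i : ι) :
    (s.disjSum t).erase (Sum.inl i) = (s.erase i).disjSum t := by
  ext x
  cases x <;> simp [Finset.mem_erase, and_comm]

lemma erase_disjSum_inr (s : Finset ι) (t : Finset κI) (k : κI) :
    (s.disjSum t).erase (Sum.inr k) = s.disjSum (t.erase k) := by
  ext x
  cases x <;> simp [Finset.mem_erase, and_comm]

variable (p g : ι ⊕ κI → ℝ)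

lemma prod_erase_inl (i : ι) :
    ∏ j ∈ Finset.univ.erase (Sum.inl i), p j
      = (∏ j ∈ Finset.univ.erase i, p (Sum.inl j)) * ∏ l, p (Sum.inr l) := by
  rw [← Finset.univ_disjSum_univ, erase_disjSum_inl, Finset.prod_disjSum]

lemma prod_erase_inr (k : κI) :
    ∏ j ∈ Finset.univ.erase (Sum.inr k), p j
      = (∏ j, p (Sum.inl j)) * ∏ l ∈ Finset.univ.erase k, p (Sum.inr l) := by
  rw [← Finset.univ_disjSum_univ, erase_disjSum_inr, Finset.prod_disjSum]

lemma sum_erase_inl (i : ι) :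
    ∑ j ∈ Finset.univ.erase (Sum.inl i), g j
      = (∑ j ∈ Finset.univ.erase i, g (Sum.inl j)) + ∑ l, g (Sum.inr l) := by
  rw [← Finset.univ_disjSum_univ, erase_disjSum_inl, Finset.sum_disjSum]

lemma sum_erase_inr (k : κI) :
    ∑ j ∈ Finset.univ.erase (Sum.inr k), g j
      = (∑ j, g (Sum.inl j)) + ∑ l ∈ Finset.univ.erase k, g (Sum.inr l) := by
  rw [← Finset.univ_disjSum_univ, erase_disjSum_inr, Finset.sum_disjSum]

lemma prod_erase_inl_inl (i i' : ι) :
    ∏ j ∈ (Finset.univ.erase (Sum.inl i)).erase (Sum.inl i'), p j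
      = (∏ j ∈ (Finset.univ.erase i).erase i', p (Sum.inl j)) * ∏ l, p (Sum.inr l) := by
  rw [← Finset.univ_disjSum_univ, erase_disjSum_inl, erase_disjSum_inl, Finset.prod_disjSum]

lemma prod_erase_inl_inr (i : ι) (k : κI) :
    ∏ j ∈ (Finset.univ.erase (Sum.inl i)).erase (Sum.inr k), p j
      = (∏ j ∈ Finset.univ.erase i, p (Sum.inl j)) *
        ∏ l ∈ Finset.univ.erase k, p (Sum.inr l) := by
  rw [← Finset.univ_disjSum_univ, erase_disjSum_inl, erase_disjSum_inr, Finset.prod_disjSum]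

lemma prod_erase_inr_inl (k : κI) (i : ι) :
    ∏ j ∈ (Finset.univ.erase (Sum.inr k)).erase (Sum.inl i), p j
      = (∏ j ∈ Finset.univ.erase i, p (Sum.inl j)) *
        ∏ l ∈ Finset.univ.erase k, p (Sum.inr l) := by
  rw [← Finset.univ_disjSum_univ, erase_disjSum_inr, erase_disjSum_inl, Finset.prod_disjSum]

lemma prod_erase_inr_inr (k k' : κI) :
    ∏ j ∈ (Finset.univ.erase (Sum.inr k)).erase (Sum.inr k'), p j
      = (∏ j, p (Sum.inl j)) * ∏ l ∈ (Finset.univ.erase k).erase k', p (Sum.inr l) := by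
  rw [← Finset.univ_disjSum_univ, erase_disjSum_inr, erase_disjSum_inr, Finset.prod_disjSum]

end DisjSum
end FVAux


namespace FVAux
variable {E : Type*} [MetricSpace E] [CompactSpace E] [MeasurableSpace E] [BorelSpace E]
variable {I : Type*} [DecidableEq I]
variable {ι κI : Type*} [Fintype ι] [DecidableEq ι] [Fintype κI] [DecidableEq κI]

lemma sum_ite_mul_right {α : Type*} (s : Finset α) (c : α → Prop) [DecidablePred c]
    (g : α → ℝ) (Q : ℝ) :
    ∑ x ∈ s, (if c x then g x * Q else 0) = (∑ x ∈ s, if c x then g x else 0) * Q := by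
  rw [Finset.sum_mul]
  exact Finset.sum_congr rfl fun x _ => by by_cases h : c x <;> simp [h]

lemma Gam2_symm (ξ : ι → I) (f : ι → C(E, ℝ)) (ξ' : κI → I) (f' : κI → C(E, ℝ))
    (X : I → ProbabilityMeasure E) :
    Gam2 ξ f ξ' f' X = Gam2 ξ' f' ξ f X := by
  unfold Gam2
  rw [Finset.sum_comm]
  refine Finset.sum_congr rfl fun k _ => Finset.sum_congr rfl fun i _ => ?_
  by_cases h : ξ i = ξ' k
  · rw [if_pos h, if_pos h.symm, ← h]
    have h1 : (fun u => (f' k) u * (f i) u) = fun u => (f i) u * (f' k) u :=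
      funext fun u => mul_comm _ _
    rw [h1]
    ring
  · rw [if_neg h, if_neg fun h' => h h'.symm]

lemma monomial_sum (ξ : ι → I) (f : ι → C(E, ℝ)) (ξ' : κI → I) (f' : κI → C(E, ℝ))
    (X : I → ProbabilityMeasure E) :
    monomial (Sum.elim ξ ξ') (Sum.elim f f') X = monomial ξ f X * monomial ξ' f' X := by
  unfold monomial
  rw [Fintype.prod_sum_type]
  rfl

lemma Gam2_sum_left {κ₂ : Type*} [Fintype κ₂] [DecidableEq κ₂]
    (ξ : ι → I) (f : ι → C(E, ℝ)) (ξ' : κI → I) (f' : κI → C(E, ℝ))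
    (ξ'' : κ₂ → I) (f'' : κ₂ → C(E, ℝ)) (X : I → ProbabilityMeasure E) :
    Gam2 (Sum.elim ξ ξ') (Sum.elim f f') ξ'' f'' X
      = monomial ξ' f' X * Gam2 ξ f ξ'' f'' X + monomial ξ f X * Gam2 ξ' f' ξ'' f'' X := by
  unfold Gam2 monomial
  rw [Fintype.sum_sum_type]
  simp only [Sum.elim_inl, Sum.elim_inr, prod_erase_inl, prod_erase_inr]
  rw [Finset.mul_sum, Finset.mul_sum]
  congr 1
  · refine Finset.sum_congr rfl fun i _ => ?_
    rw [Finset.mul_sum]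
    refine Finset.sum_congr rfl fun k _ => ?_
    by_cases h : ξ i = ξ'' k <;> simp [h] <;> ring
  · refine Finset.sum_congr rfl fun i _ => ?_
    rw [Finset.mul_sum]
    refine Finset.sum_congr rfl fun k _ => ?_
    by_cases h : ξ' i = ξ'' k <;> simp [h] <;> ring

lemma LGen_sum (a : I → I → ℝ) (A : C(E, ℝ) →L[ℝ] C(E, ℝ)) (V : E → E → ℝ)
    (η : Kernel (E × E) E) (s r ρ : ℝ) (ξ : ι → I) (f : ι → C(E, ℝ))
    (ξ' : κI → I) (f' : κI → C(E, ℝ)) (X : I → ProbabilityMeasure E) :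
    LGen a A V η s r ρ (Sum.elim ξ ξ') (Sum.elim f f') X
      = monomial ξ' f' X * LGen a A V η s r ρ ξ f X
        + monomial ξ f X * LGen a A V η s r ρ ξ' f' X
        + Gam2 ξ f ξ' f' X := by
  classical
  unfold LGen monomial Gam2
  rw [Fintype.sum_sum_type, Fintype.sum_sum_type]
  simp only [Sum.elim_inl, Sum.elim_inr, prod_erase_inl, prod_erase_inr,
    sum_erase_inl, sum_erase_inr, prod_erase_inl_inl, prod_erase_inl_inr,
    prod_erase_inr_inl, prod_erase_inr_inr, Finset.sum_add_distrib]
  -- abbreviations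
  set P : ℝ := ∏ j, pairM (X (ξ j) : Measure E) (f j) with hP
  set Q : ℝ := ∏ l, pairM (X (ξ' l) : Measure E) (f' l) with hQ
  set B1 : ℝ := ∑ i, bPair a A V η s r ρ (fun ζ => (X ζ : Measure E)) (ξ i) (f i) *
      ∏ j ∈ Finset.univ.erase i, pairM (X (ξ j) : Measure E) (f j) with hB1
  set B2 : ℝ := ∑ k, bPair a A V η s r ρ (fun ζ => (X ζ : Measure E)) (ξ' k) (f' k) *
      ∏ l ∈ Finset.univ.erase k, pairM (X (ξ' l) : Measure E) (f' l) with hB2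
  set G11 : ℝ := ∑ i, ∑ k ∈ Finset.univ.erase i,
      (if ξ i = ξ k then
        (pairM (X (ξ i) : Measure E) (fun u => f i u * f k u)
            - pairM (X (ξ i) : Measure E) (f i) * pairM (X (ξ k) : Measure E) (f k)) *
          ∏ j ∈ (Finset.univ.erase i).erase k, pairM (X (ξ j) : Measure E) (f j)
      else 0) with hG11
  set G22 : ℝ := ∑ k, ∑ k' ∈ Finset.univ.erase k,
      (if ξ' k = ξ' k' then
        (pairM (X (ξ' k) : Measure E) (fun u => f' k u * f' k' u)
            - pairM (X (ξ' k) : Measure E) (f' k) * pairM (X (ξ' k') : Measure E) (f' k')) *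
          ∏ l ∈ (Finset.univ.erase k).erase k', pairM (X (ξ' l) : Measure E) (f' l)
      else 0) with hG22
  set G12 : ℝ := ∑ i, ∑ k,
      (if ξ i = ξ' k then
        (pairM (X (ξ i) : Measure E) (fun u => f i u * f' k u)
            - pairM (X (ξ i) : Measure E) (f i) * pairM (X (ξ' k) : Measure E) (f' k)) *
          ((∏ j ∈ Finset.univ.erase i, pairM (X (ξ j) : Measure E) (f j)) *
           (∏ l ∈ Finset.univ.erase k, pairM (X (ξ' l) : Measure E) (f' l)))
      else 0) with hG12
  have e1 : (∑ x : ι, bPair a A V η s r ρ (fun ζ => (X ζ : Measure E)) (ξ x) (f x) *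
      ((∏ j ∈ Finset.univ.erase x, pairM (X (ξ j) : Measure E) (f j)) * Q)) = B1 * Q := by
    rw [hB1, Finset.sum_mul]
    exact Finset.sum_congr rfl fun i _ => by ring
  have e2 : (∑ x : κI, bPair a A V η s r ρ (fun ζ => (X ζ : Measure E)) (ξ' x) (f' x) *
      (P * ∏ l ∈ Finset.univ.erase x, pairM (X (ξ' l) : Measure E) (f' l))) = P * B2 := by
    rw [hB2, Finset.mul_sum]
    exact Finset.sum_congr rfl fun k _ => by ring
  have e3 : (∑ i : ι, ∑ k ∈ Finset.univ.erase i,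
      if ξ i = ξ k then
        (pairM (X (ξ i) : Measure E) (fun u => f i u * f k u)
            - pairM (X (ξ i) : Measure E) (f i) * pairM (X (ξ k) : Measure E) (f k)) *
          ((∏ j ∈ (Finset.univ.erase i).erase k, pairM (X (ξ j) : Measure E) (f j)) * Q)
      else 0) = G11 * Q := by
    rw [hG11, Finset.sum_mul]
    refine Finset.sum_congr rfl fun i _ => ?_
    rw [Finset.sum_mul]
    refine Finset.sum_congr rfl fun k _ => ?_
    by_cases h : ξ i = ξ k
    · simp only [if_pos h]; ring
    · simp only [if_neg h, zero_mul]
  have e4 : (∑ k : κI, ∑ k' ∈ Finset.univ.erase k,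
      if ξ' k = ξ' k' then
        (pairM (X (ξ' k) : Measure E) (fun u => f' k u * f' k' u)
            - pairM (X (ξ' k) : Measure E) (f' k) * pairM (X (ξ' k') : Measure E) (f' k')) *
          (P * ∏ l ∈ (Finset.univ.erase k).erase k', pairM (X (ξ' l) : Measure E) (f' l))
      else 0) = P * G22 := by
    rw [hG22, Finset.mul_sum]
    refine Finset.sum_congr rfl fun k _ => ?_
    rw [Finset.mul_sum]
    refine Finset.sum_congr rfl fun k' _ => ?_
    by_cases h : ξ' k = ξ' k'
    · simp only [if_pos h]; ring
    · simp only [if_neg h, mul_zero]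
  have e5 : (∑ k : κI, ∑ i : ι,
      if ξ' k = ξ i then
        (pairM (X (ξ' k) : Measure E) (fun u => f' k u * f i u)
            - pairM (X (ξ' k) : Measure E) (f' k) * pairM (X (ξ i) : Measure E) (f i)) *
          ((∏ j ∈ Finset.univ.erase i, pairM (X (ξ j) : Measure E) (f j)) *
           (∏ l ∈ Finset.univ.erase k, pairM (X (ξ' l) : Measure E) (f' l)))
      else 0) = G12 := by
    rw [hG12]
    conv_rhs => rw [Finset.sum_comm]
    refine Finset.sum_congr rfl fun k _ => Finset.sum_congr rfl fun i _ => ?_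
    by_cases h : ξ i = ξ' k
    · rw [if_pos h.symm, if_pos h, ← h]
      have h1 : (fun u => (f' k) u * (f i) u) = fun u => (f i) u * (f' k) u :=
        funext fun u => mul_comm _ _
      rw [h1]
      ring
    · rw [if_neg fun h' => h h'.symm, if_neg h]
  rw [e1, e2, e3, e4, e5]
  ring

end FVAux


namespace FVAux
variable {E : Type*} [MetricSpace E] [CompactSpace E] [MeasurableSpace E] [BorelSpace E]
variable {I : Type*} [DecidableEq I]
variable {ι κI : Type*} [Fintype ι] [DecidableEq ι] [Fintype κI] [DecidableEq κI]

lemma Gam2_reindex_right {ι' : Type*} [Fintype ι'] [DecidableEq ι'] (e : ι' ≃ κI)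
    (ξ : ι → I) (f : ι → C(E, ℝ)) (ξ' : κI → I) (f' : κI → C(E, ℝ)) :
    Gam2 ξ f (ξ' ∘ e) (f' ∘ e) = Gam2 ξ f ξ' f' := by
  funext X
  rw [Gam2_symm, Gam2_reindex_left, Gam2_symm]

lemma monomial_single (ζ : I) (g : C(E, ℝ)) (X : I → ProbabilityMeasure E) :
    monomial (fun _ : Fin 1 => ζ) (fun _ => g) X = pairM (X ζ : Measure E) g := by
  simp [monomial]

lemma monomial_zero : monomial (Fin.elim0 : Fin 0 → I) (fun i => Fin.elim0 i) =
    fun _ : I → ProbabilityMeasure E => (1 : ℝ) := by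
  funext X; simp [monomial]

lemma LGen_zero (a : I → I → ℝ) (A : C(E, ℝ) →L[ℝ] C(E, ℝ)) (V : E → E → ℝ)
    (η : Kernel (E × E) E) (s r ρ : ℝ) :
    LGen a A V η s r ρ (Fin.elim0 : Fin 0 → I) (fun i => Fin.elim0 i) =
      fun _ : I → ProbabilityMeasure E => (0 : ℝ) := by
  funext X; simp [LGen]

lemma LGen_single (a : I → I → ℝ) (A : C(E, ℝ) →L[ℝ] C(E, ℝ)) (V : E → E → ℝ)
    (η : Kernel (E × E) E) (s r ρ : ℝ) (ζ : I) (g : C(E, ℝ)) (X : I → ProbabilityMeasure E) :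
    LGen a A V η s r ρ (fun _ : Fin 1 => ζ) (fun _ => g) X
      = bPair a A V η s r ρ (fun w => (X w : Measure E)) ζ g := by
  have h0 : (Finset.univ : Finset (Fin 1)).erase 0 = ∅ := by decide
  simp [LGen, h0]

lemma Gam2_zero_left (ξ' : κI → I) (f' : κI → C(E, ℝ)) :
    Gam2 (Fin.elim0 : Fin 0 → I) (fun i => Fin.elim0 i) ξ' f' =
      fun _ : I → ProbabilityMeasure E => (0 : ℝ) := by
  funext X; simp [Gam2]

lemma Dmono_pair_eq (ξ : ι → I) (f : ι → C(E, ℝ)) (ζ : I) (f₀ : C(E, ℝ))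
    (X : I → ProbabilityMeasure E) :
    pairM (X ζ : Measure E) (fun u => Dmono ξ f X ζ u * f₀ u)
      - pairM (X ζ : Measure E) (Dmono ξ f X ζ) * pairM (X ζ : Measure E) f₀
      = Gam2 ξ f (fun _ : Fin 1 => ζ) (fun _ => f₀) X := by
  classical
  set c : ι → ℝ := fun i => ∏ j ∈ Finset.univ.erase i, pairM (X (ξ j) : Measure E) (f j) with hc
  have hint : ∀ (g : C(E, ℝ)) (d : ℝ), Integrable (fun u => g u * d) (X ζ : Measure E) := by
    intro g d
    refine integrable_of_bdd ((g.continuous.measurable.mul_const d).aestronglyMeasurable)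
      (C := ‖g‖ * |d|) fun u => ?_
    rw [abs_mul]
    exact mul_le_mul_of_nonneg_right
      (by simpa [Real.norm_eq_abs] using g.norm_coe_le_norm u) (abs_nonneg d)
  have h1 : pairM (X ζ : Measure E) (Dmono ξ f X ζ)
      = ∑ i, if ξ i = ζ then pairM (X ζ : Measure E) (f i) * c i else 0 := by
    rw [pairM]
    have : ∀ u, Dmono ξ f X ζ u = ∑ i, if ξ i = ζ then f i u * c i else 0 := fun u => rfl
    simp only [this]
    rw [integral_finset_sum _ fun i _ => ?_]
    · refine Finset.sum_congr rfl fun i _ => ?_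
      by_cases h : ξ i = ζ
      · simp only [if_pos h]
        rw [integral_mul_const]
        rfl
      · simp only [if_neg h, integral_zero]
    · by_cases h : ξ i = ζ
      · simpa only [if_pos h] using hint (f i) (c i)
      · simp only [if_neg h]; exact integrable_zero _ _ _
  have h2 : pairM (X ζ : Measure E) (fun u => Dmono ξ f X ζ u * f₀ u)
      = ∑ i, if ξ i = ζ then
          pairM (X ζ : Measure E) (fun u => f i u * f₀ u) * c i else 0 := by
    rw [pairM]
    have hre : ∀ u, Dmono ξ f X ζ u * f₀ u
        = ∑ i, if ξ i = ζ then ((f i * f₀ : C(E, ℝ)) u) * c i else 0 := by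
      intro u
      rw [Dmono, Finset.sum_mul]
      refine Finset.sum_congr rfl fun i _ => ?_
      by_cases h : ξ i = ζ
      · simp only [if_pos h, ContinuousMap.mul_apply]
        ring
      · simp only [if_neg h, zero_mul]
    simp only [hre]
    rw [integral_finset_sum _ fun i _ => ?_]
    · refine Finset.sum_congr rfl fun i _ => ?_
      by_cases h : ξ i = ζ
      · simp only [if_pos h]
        rw [integral_mul_const]
        rfl
      · simp only [if_neg h, integral_zero]
    · by_cases h : ξ i = ζ
      · simpa only [if_pos h] using hint (f i * f₀) (c i)
      · simp only [if_neg h]; exact integrable_zero _ _ _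
  rw [h1, h2, Finset.sum_mul, ← Finset.sum_sub_distrib]
  have hG : Gam2 ξ f (fun _ : Fin 1 => ζ) (fun _ => f₀) X
      = ∑ i, if ξ i = ζ then
          (pairM (X (ξ i) : Measure E) (fun u => f i u * f₀ u)
            - pairM (X (ξ i) : Measure E) (f i) * pairM (X ζ : Measure E) f₀) * (c i * 1) else 0 := by
    rw [Gam2]
    refine Finset.sum_congr rfl fun i _ => ?_
    rw [Fin.sum_univ_one]
    have h0 : (Finset.univ : Finset (Fin 1)).erase 0 = ∅ := by decide
    rw [h0]
    simp [hc]
  rw [hG]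
  refine Finset.sum_congr rfl fun i _ => ?_
  by_cases h : ξ i = ζ
  · simp only [h, eq_self_iff_true, if_true]
    ring
  · simp [if_neg h]

lemma nice_monomial (ξ : ι → I) (f : ι → C(E, ℝ)) : Nice (monomial ξ f) :=
  Nice.prod fun i _ => nice_pairCM (ξ i) (f i)

lemma nice_Gam2 (ξ : ι → I) (f : ι → C(E, ℝ)) (ξ' : κI → I) (f' : κI → C(E, ℝ)) :
    Nice (fun X : I → ProbabilityMeasure E => Gam2 ξ f ξ' f' X) := by
  refine Nice.sum fun i _ => Nice.sum fun k _ => Nice.ite ?_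
  exact ((nice_pairCM_mul (ξ i) (f i) (f' k)).sub
      ((nice_pairCM (ξ i) (f i)).mul (nice_pairCM (ξ' k) (f' k)))).mul
    ((Nice.prod fun j _ => nice_pairCM (ξ j) (f j)).mul
      (Nice.prod fun l _ => nice_pairCM (ξ' l) (f' l)))

lemma nice_LGen [Countable I] (a : I → I → ℝ) (hapos : ∀ ξ ξ', 0 ≤ a ξ ξ')
    (harow : ∀ ξ, HasSum (a ξ) 1) (A : C(E, ℝ) →L[ℝ] C(E, ℝ)) (V : E → E → ℝ)
    (hVmeas : Measurable fun p : E × E => V p.1 p.2) {CV : ℝ} (hVbdd : ∀ u v, |V u v| ≤ CV)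
    (κ : Kernel (E × E) E) [IsMarkovKernel κ] (s r ρ : ℝ) (ξ : ι → I) (f : ι → C(E, ℝ)) :
    Nice (LGen a A V κ s r ρ ξ f) := by
  refine Nice.add (Nice.sum fun i _ => ?_) (Nice.const_mul (Nice.sum fun i _ => Nice.sum fun k _ => Nice.ite ?_) (1/2))
  · exact (nice_bPair a hapos harow A V hVmeas hVbdd κ s r ρ (ξ i) (f i)).mul
      (Nice.prod fun j _ => nice_pairCM (ξ j) (f j))
  · exact ((nice_pairCM_mul (ξ i) (f i) (f k)).sub
      ((nice_pairCM (ξ i) (f i)).mul (nice_pairCM (ξ k) (f k)))).mul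
      (Nice.prod fun j _ => nice_pairCM (ξ j) (f j))

end FVAux


/-- A Borel probability measure `Π` on `M₁(E)^I` is reversible for the
interacting Fleming-Viot generator `L` iff for every monomial `Φ`, every site `ζ` and every
`f₀ ∈ C(E)`:
`−½∫(⟨X_ζ, D_ζΦ·f₀⟩ − ⟨X_ζ, D_ζΦ⟩⟨X_ζ, f₀⟩) dΠ = ∫ Φ(X)⟨b_ζ(X), f₀⟩ dΠ`. -/
theorem reversible_iff_integration_by_parts
    [Countable I] [DecidableEq I]
    (a : I → I → ℝ) (ha0 : ∀ ξ, a ξ ξ = 0) (hapos : ∀ ξ ξ', 0 ≤ a ξ ξ')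
    (harow : ∀ ξ, HasSum (a ξ) 1)
    (A : C(E, ℝ) →L[ℝ] C(E, ℝ))
    (V : E → E → ℝ) (hVsymm : ∀ u v, V u v = V v u)
    (hVmeas : Measurable fun p : E × E => V p.1 p.2) (hVbdd : ∃ C : ℝ, ∀ u v, |V u v| ≤ C)
    (κ : Kernel (E × E) E) [IsMarkovKernel κ]
    (s r ρ : ℝ) (hs : 0 ≤ s) (hr : 0 ≤ r) (hρ : 0 ≤ ρ)
    (L : ((I → ProbabilityMeasure E) → ℝ) →ₗ[ℝ] ((I → ProbabilityMeasure E) → ℝ))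
    (hL : IsFVGenerator a A V κ s r ρ L)
    (P : Measure (I → ProbabilityMeasure E)) [IsProbabilityMeasure P] :
    IsReversible L P ↔
      ∀ (m : ℕ) (ξ : Fin m → I) (f : Fin m → C(E, ℝ)) (ζ : I) (f₀ : C(E, ℝ)),
        -(1/2) * ∫ X, (pairM (X ζ : Measure E) (fun u => Dmono ξ f X ζ u * f₀ u)
            - pairM (X ζ : Measure E) (Dmono ξ f X ζ)
              * pairM (X ζ : Measure E) f₀) ∂P
          = ∫ X, monomial ξ f X
              * bPair a A V κ s r ρ (fun w => (X w : Measure E)) ζ f₀ ∂P := by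
  classical
  obtain ⟨CV, hCV⟩ := hVbdd
  have hCV' : ∀ u v, |V u v| ≤ CV := hCV
  have hmem : ∀ (m : ℕ) (ξ : Fin m → I) (f : Fin m → C(E, ℝ)), monomial ξ f ∈ polyAlg E I :=
    fun m ξ f => Submodule.subset_span ⟨m, ξ, f, rfl⟩
  have hNiceL : ∀ {m : ℕ} (ξ : Fin m → I) (f : Fin m → C(E, ℝ)),
      FVAux.Nice (L (monomial ξ f)) := by
    intro m ξ f
    rw [hL]
    exact FVAux.nice_LGen a hapos harow A V hVmeas hCV' κ s r ρ ξ f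
  constructor
  · -- reversibility ⟹ integration by parts
    intro hrev m ξ f ζ f₀
    have hrev1 : ∫ X, L (monomial ξ f) X * monomial (fun _ : Fin 1 => ζ) (fun _ => f₀) X ∂P
        = ∫ X, monomial ξ f X
            * bPair a A V κ s r ρ (fun w => (X w : Measure E)) ζ f₀ ∂P := by
      rw [hrev _ (hmem m ξ f) _ (hmem 1 _ _)]
      refine integral_congr_ae (ae_of_all _ fun X => ?_)
      show L (monomial (fun _ : Fin 1 => ζ) (fun _ => f₀)) X * monomial ξ f X
        = monomial ξ f X * bPair a A V κ s r ρ (fun w => (X w : Measure E)) ζ f₀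
      rw [hL 1, FVAux.LGen_single]
      ring
    have hΘL : L (monomial ((Sum.elim ξ fun _ : Fin 1 => ζ) ∘ finSumFinEquiv.symm)
        ((Sum.elim f fun _ : Fin 1 => f₀) ∘ finSumFinEquiv.symm))
        = LGen a A V κ s r ρ ((Sum.elim ξ fun _ : Fin 1 => ζ) ∘ finSumFinEquiv.symm)
          ((Sum.elim f fun _ : Fin 1 => f₀) ∘ finSumFinEquiv.symm) := hL (m + 1) _ _
    have hzero : ∫ X, L (monomial ((Sum.elim ξ fun _ : Fin 1 => ζ) ∘ finSumFinEquiv.symm)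
        ((Sum.elim f fun _ : Fin 1 => f₀) ∘ finSumFinEquiv.symm)) X ∂P = 0 := by
      have h := hrev _ (hmem (m + 1) ((Sum.elim ξ fun _ : Fin 1 => ζ) ∘ finSumFinEquiv.symm)
        ((Sum.elim f fun _ : Fin 1 => f₀) ∘ finSumFinEquiv.symm)) _
        (hmem 0 Fin.elim0 fun i => Fin.elim0 i)
      rw [hL 0, FVAux.LGen_zero] at h
      simpa [FVAux.monomial_zero] using h
    have hpoint : ∀ X, L (monomial ((Sum.elim ξ fun _ : Fin 1 => ζ) ∘ finSumFinEquiv.symm)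
        ((Sum.elim f fun _ : Fin 1 => f₀) ∘ finSumFinEquiv.symm)) X
        = monomial (fun _ : Fin 1 => ζ) (fun _ => f₀) X * LGen a A V κ s r ρ ξ f X
          + monomial ξ f X * bPair a A V κ s r ρ (fun w => (X w : Measure E)) ζ f₀
          + FVAux.Gam2 ξ f (fun _ : Fin 1 => ζ) (fun _ => f₀) X := by
      intro X
      rw [hΘL, FVAux.LGen_reindex, FVAux.LGen_sum, FVAux.LGen_single]
    have it1 : Integrable (fun X => monomial (fun _ : Fin 1 => ζ) (fun _ => f₀) X
        * LGen a A V κ s r ρ ξ f X) P :=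
      ((FVAux.nice_monomial _ _).mul
        (FVAux.nice_LGen a hapos harow A V hVmeas hCV' κ s r ρ ξ f)).integrable P
    have it2 : Integrable (fun X => monomial ξ f X
        * bPair a A V κ s r ρ (fun w => (X w : Measure E)) ζ f₀) P :=
      ((FVAux.nice_monomial _ _).mul
        (FVAux.nice_bPair a hapos harow A V hVmeas hCV' κ s r ρ ζ f₀)).integrable P
    have it3 : Integrable (fun X => FVAux.Gam2 ξ f (fun _ : Fin 1 => ζ) (fun _ => f₀) X) P :=
      (FVAux.nice_Gam2 _ _ _ _).integrable P
    have it12 : Integrable (fun X => monomial (fun _ : Fin 1 => ζ) (fun _ => f₀) X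
        * LGen a A V κ s r ρ ξ f X
        + monomial ξ f X * bPair a A V κ s r ρ (fun w => (X w : Measure E)) ζ f₀) P :=
      (((FVAux.nice_monomial _ _).mul
          (FVAux.nice_LGen a hapos harow A V hVmeas hCV' κ s r ρ ξ f)).add
        ((FVAux.nice_monomial _ _).mul
          (FVAux.nice_bPair a hapos harow A V hVmeas hCV' κ s r ρ ζ f₀))).integrable P
    have hsplit : ∫ X, L (monomial ((Sum.elim ξ fun _ : Fin 1 => ζ) ∘ finSumFinEquiv.symm)
        ((Sum.elim f fun _ : Fin 1 => f₀) ∘ finSumFinEquiv.symm)) X ∂P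
        = (∫ X, monomial (fun _ : Fin 1 => ζ) (fun _ => f₀) X
              * LGen a A V κ s r ρ ξ f X ∂P)
          + (∫ X, monomial ξ f X
              * bPair a A V κ s r ρ (fun w => (X w : Measure E)) ζ f₀ ∂P)
          + ∫ X, FVAux.Gam2 ξ f (fun _ : Fin 1 => ζ) (fun _ => f₀) X ∂P := by
      have h0 : ∫ X, L (monomial ((Sum.elim ξ fun _ : Fin 1 => ζ) ∘ finSumFinEquiv.symm)
          ((Sum.elim f fun _ : Fin 1 => f₀) ∘ finSumFinEquiv.symm)) X ∂P
          = ∫ X, (monomial (fun _ : Fin 1 => ζ) (fun _ => f₀) X * LGen a A V κ s r ρ ξ f X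
              + monomial ξ f X * bPair a A V κ s r ρ (fun w => (X w : Measure E)) ζ f₀
              + FVAux.Gam2 ξ f (fun _ : Fin 1 => ζ) (fun _ => f₀) X) ∂P :=
        integral_congr_ae (ae_of_all _ fun X => hpoint X)
      rw [h0, integral_add it12 it3, integral_add it1 it2]
    have hT1 : ∫ X, monomial (fun _ : Fin 1 => ζ) (fun _ => f₀) X
        * LGen a A V κ s r ρ ξ f X ∂P
        = ∫ X, monomial ξ f X
            * bPair a A V κ s r ρ (fun w => (X w : Measure E)) ζ f₀ ∂P := by
      rw [← hrev1]
      refine integral_congr_ae (ae_of_all _ fun X => ?_)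
      show monomial (fun _ : Fin 1 => ζ) (fun _ => f₀) X * LGen a A V κ s r ρ ξ f X
        = L (monomial ξ f) X * monomial (fun _ : Fin 1 => ζ) (fun _ => f₀) X
      rw [hL m]
      ring
    have hDG : ∫ X, (pairM (X ζ : Measure E) (fun u => Dmono ξ f X ζ u * f₀ u)
        - pairM (X ζ : Measure E) (Dmono ξ f X ζ) * pairM (X ζ : Measure E) f₀) ∂P
        = ∫ X, FVAux.Gam2 ξ f (fun _ : Fin 1 => ζ) (fun _ => f₀) X ∂P :=
      integral_congr_ae (ae_of_all _ fun X => FVAux.Dmono_pair_eq ξ f ζ f₀ X)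
    rw [hDG]
    rw [hsplit, hT1] at hzero
    linarith
  · -- integration by parts ⟹ reversibility
    intro hIBP
    have hIBP' : ∀ (m : ℕ) (ξ : Fin m → I) (f : Fin m → C(E, ℝ)) (ζ : I) (f₀ : C(E, ℝ)),
        ∫ X, monomial ξ f X * bPair a A V κ s r ρ (fun w => (X w : Measure E)) ζ f₀ ∂P
          = -(1/2) * ∫ X, FVAux.Gam2 ξ f (fun _ : Fin 1 => ζ) (fun _ => f₀) X ∂P := by
      intro m ξ f ζ f₀
      rw [← hIBP m ξ f ζ f₀]
      congr 1
      exact integral_congr_ae (ae_of_all _ fun X => FVAux.Dmono_pair_eq ξ f ζ f₀ X)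
    have claim : ∀ (m n : ℕ) (ξ : Fin m → I) (f : Fin m → C(E, ℝ))
        (ξ' : Fin n → I) (f' : Fin n → C(E, ℝ)),
        ∫ X, LGen a A V κ s r ρ ξ f X * monomial ξ' f' X ∂P
          = -(1/2) * ∫ X, FVAux.Gam2 ξ f ξ' f' X ∂P := by
      intro m
      induction m with
      | zero =>
        intro n ξ f ξ' f'
        have h1 : ξ = Fin.elim0 := funext fun i => i.elim0
        have h2 : f = fun i => Fin.elim0 i := funext fun i => i.elim0
        rw [h1, h2, FVAux.LGen_zero, FVAux.Gam2_zero_left]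
        simp
      | succ m ih =>
        intro n ξh fh ξ' f'
        -- decompose the (m+1)-monomial data
        obtain ⟨ξm, ζ, hdx⟩ : ∃ (ξm : Fin m → I) (ζ : I),
            (Sum.elim ξm fun _ : Fin 1 => ζ) ∘ finSumFinEquiv.symm = ξh := by
          refine ⟨fun i => ξh (finSumFinEquiv (Sum.inl i)),
            ξh (finSumFinEquiv (Sum.inr 0)), funext fun j => ?_⟩
          obtain ⟨x, rfl⟩ : ∃ x, finSumFinEquiv x = j :=
            ⟨finSumFinEquiv.symm j, Equiv.apply_symm_apply _ _⟩
          rcases x with i | k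
          · simp
          · have hk : k = 0 := Subsingleton.elim _ _
            subst hk; simp
        obtain ⟨fm, g, hdf⟩ : ∃ (fm : Fin m → C(E, ℝ)) (g : C(E, ℝ)),
            (Sum.elim fm fun _ : Fin 1 => g) ∘ finSumFinEquiv.symm = fh := by
          refine ⟨fun i => fh (finSumFinEquiv (Sum.inl i)),
            fh (finSumFinEquiv (Sum.inr 0)), funext fun j => ?_⟩
          obtain ⟨x, rfl⟩ : ∃ x, finSumFinEquiv x = j :=
            ⟨finSumFinEquiv.symm j, Equiv.apply_symm_apply _ _⟩
          rcases x with i | k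
          · simp
          · have hk : k = 0 := Subsingleton.elim _ _
            subst hk; simp
        -- niceness
        have hNg : FVAux.Nice (fun X : I → ProbabilityMeasure E => pairM (X ζ : Measure E) g) :=
          FVAux.nice_pairCM ζ g
        have hNΦ : FVAux.Nice (monomial ξm fm) := FVAux.nice_monomial _ _
        have hNΨ : FVAux.Nice (monomial ξ' f') := FVAux.nice_monomial _ _
        have hNL : FVAux.Nice (LGen a A V κ s r ρ ξm fm) :=
          FVAux.nice_LGen a hapos harow A V hVmeas hCV' κ s r ρ ξm fm
        have hNbP : FVAux.Nice (fun X : I → ProbabilityMeasure E =>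
            bPair a A V κ s r ρ (fun w => (X w : Measure E)) ζ g) :=
          FVAux.nice_bPair a hapos harow A V hVmeas hCV' κ s r ρ ζ g
        have hNG1 : FVAux.Nice (fun X : I → ProbabilityMeasure E =>
            FVAux.Gam2 ξm fm (fun _ : Fin 1 => ζ) (fun _ => g) X) := FVAux.nice_Gam2 _ _ _ _
        have hNG2 : FVAux.Nice (fun X : I → ProbabilityMeasure E => FVAux.Gam2 ξm fm ξ' f' X) :=
          FVAux.nice_Gam2 _ _ _ _
        have hNG3 : FVAux.Nice (fun X : I → ProbabilityMeasure E =>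
            FVAux.Gam2 ξ' f' (fun _ : Fin 1 => ζ) (fun _ => g) X) := FVAux.nice_Gam2 _ _ _ _
        -- pointwise decomposition of the generator
        have hgen : ∀ X, LGen a A V κ s r ρ ξh fh X
            = pairM (X ζ : Measure E) g * LGen a A V κ s r ρ ξm fm X
              + monomial ξm fm X * bPair a A V κ s r ρ (fun w => (X w : Measure E)) ζ g
              + FVAux.Gam2 ξm fm (fun _ : Fin 1 => ζ) (fun _ => g) X := by
          intro X
          conv_lhs => rw [← hdx, ← hdf]
          rw [FVAux.LGen_reindex, FVAux.LGen_sum, FVAux.monomial_single, FVAux.LGen_single]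
        -- split the integral into three parts
        have it1 : Integrable (fun X => LGen a A V κ s r ρ ξm fm X
            * (pairM (X ζ : Measure E) g * monomial ξ' f' X)) P :=
          (hNL.mul (hNg.mul hNΨ)).integrable P
        have it2 : Integrable (fun X => (monomial ξm fm X * monomial ξ' f' X)
            * bPair a A V κ s r ρ (fun w => (X w : Measure E)) ζ g) P :=
          ((hNΦ.mul hNΨ).mul hNbP).integrable P
        have it3 : Integrable (fun X => FVAux.Gam2 ξm fm (fun _ : Fin 1 => ζ) (fun _ => g) X
            * monomial ξ' f' X) P := (hNG1.mul hNΨ).integrable P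
        have it12 : Integrable (fun X => LGen a A V κ s r ρ ξm fm X
            * (pairM (X ζ : Measure E) g * monomial ξ' f' X)
            + (monomial ξm fm X * monomial ξ' f' X)
              * bPair a A V κ s r ρ (fun w => (X w : Measure E)) ζ g) P :=
          ((hNL.mul (hNg.mul hNΨ)).add ((hNΦ.mul hNΨ).mul hNbP)).integrable P
        have hmain : ∫ X, LGen a A V κ s r ρ ξh fh X * monomial ξ' f' X ∂P
            = (∫ X, LGen a A V κ s r ρ ξm fm X
                  * (pairM (X ζ : Measure E) g * monomial ξ' f' X) ∂P)
              + (∫ X, (monomial ξm fm X * monomial ξ' f' X)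
                  * bPair a A V κ s r ρ (fun w => (X w : Measure E)) ζ g ∂P)
              + ∫ X, FVAux.Gam2 ξm fm (fun _ : Fin 1 => ζ) (fun _ => g) X * monomial ξ' f' X ∂P := by
          have h0 : ∫ X, LGen a A V κ s r ρ ξh fh X * monomial ξ' f' X ∂P
              = ∫ X, (LGen a A V κ s r ρ ξm fm X
                    * (pairM (X ζ : Measure E) g * monomial ξ' f' X)
                  + (monomial ξm fm X * monomial ξ' f' X)
                    * bPair a A V κ s r ρ (fun w => (X w : Measure E)) ζ g
                  + FVAux.Gam2 ξm fm (fun _ : Fin 1 => ζ) (fun _ => g) X * monomial ξ' f' X) ∂P := by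
            refine integral_congr_ae (ae_of_all _ fun X => ?_)
            simp only [hgen]
            ring
          rw [h0, integral_add it12 it3, integral_add it1 it2]
        -- first piece via the induction hypothesis
        have hm1 : ∀ X : I → ProbabilityMeasure E,
            monomial ((Sum.elim (fun _ : Fin 1 => ζ) ξ') ∘ finSumFinEquiv.symm)
              ((Sum.elim (fun _ : Fin 1 => g) f') ∘ finSumFinEquiv.symm) X
            = pairM (X ζ : Measure E) g * monomial ξ' f' X := by
          intro X
          rw [FVAux.monomial_reindex, FVAux.monomial_sum, FVAux.monomial_single]
        have hg2 : ∀ X : I → ProbabilityMeasure E,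
            FVAux.Gam2 ξm fm ((Sum.elim (fun _ : Fin 1 => ζ) ξ') ∘ finSumFinEquiv.symm)
              ((Sum.elim (fun _ : Fin 1 => g) f') ∘ finSumFinEquiv.symm) X
            = monomial ξ' f' X * FVAux.Gam2 ξm fm (fun _ : Fin 1 => ζ) (fun _ => g) X
              + pairM (X ζ : Measure E) g * FVAux.Gam2 ξm fm ξ' f' X := by
          intro X
          rw [FVAux.Gam2_reindex_right, FVAux.Gam2_symm, FVAux.Gam2_sum_left,
            FVAux.monomial_single,
            FVAux.Gam2_symm (fun _ : Fin 1 => ζ) (fun _ => g) ξm fm X,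
            FVAux.Gam2_symm ξ' f' ξm fm X]
        have e1 : ∫ X, LGen a A V κ s r ρ ξm fm X
              * (pairM (X ζ : Measure E) g * monomial ξ' f' X) ∂P
            = -(1/2) * ((∫ X, monomial ξ' f' X
                  * FVAux.Gam2 ξm fm (fun _ : Fin 1 => ζ) (fun _ => g) X ∂P)
                + ∫ X, pairM (X ζ : Measure E) g * FVAux.Gam2 ξm fm ξ' f' X ∂P) := by
          have h := ih (1 + n) ξm fm ((Sum.elim (fun _ : Fin 1 => ζ) ξ') ∘ finSumFinEquiv.symm)
            ((Sum.elim (fun _ : Fin 1 => g) f') ∘ finSumFinEquiv.symm)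
          have hLHS : ∫ X, LGen a A V κ s r ρ ξm fm X
              * (pairM (X ζ : Measure E) g * monomial ξ' f' X) ∂P
              = ∫ X, LGen a A V κ s r ρ ξm fm X
                * monomial ((Sum.elim (fun _ : Fin 1 => ζ) ξ') ∘ finSumFinEquiv.symm)
                  ((Sum.elim (fun _ : Fin 1 => g) f') ∘ finSumFinEquiv.symm) X ∂P :=
            integral_congr_ae (ae_of_all _ fun X => by simp only [hm1])
          have hRHS : ∫ X, FVAux.Gam2 ξm fm ((Sum.elim (fun _ : Fin 1 => ζ) ξ') ∘ finSumFinEquiv.symm)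
                ((Sum.elim (fun _ : Fin 1 => g) f') ∘ finSumFinEquiv.symm) X ∂P
              = (∫ X, monomial ξ' f' X
                  * FVAux.Gam2 ξm fm (fun _ : Fin 1 => ζ) (fun _ => g) X ∂P)
                + ∫ X, pairM (X ζ : Measure E) g * FVAux.Gam2 ξm fm ξ' f' X ∂P := by
            rw [integral_congr_ae (ae_of_all P fun X => hg2 X)]
            exact integral_add ((hNΨ.mul hNG1).integrable P) ((hNg.mul hNG2).integrable P)
          rw [hLHS, h, hRHS]
        -- second piece via integration by parts
        have hm2 : ∀ X : I → ProbabilityMeasure E,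
            monomial ((Sum.elim ξm ξ') ∘ finSumFinEquiv.symm)
              ((Sum.elim fm f') ∘ finSumFinEquiv.symm) X
            = monomial ξm fm X * monomial ξ' f' X := by
          intro X
          rw [FVAux.monomial_reindex, FVAux.monomial_sum]
        have hg3 : ∀ X : I → ProbabilityMeasure E,
            FVAux.Gam2 ((Sum.elim ξm ξ') ∘ finSumFinEquiv.symm)
              ((Sum.elim fm f') ∘ finSumFinEquiv.symm) (fun _ : Fin 1 => ζ) (fun _ => g) X
            = monomial ξ' f' X * FVAux.Gam2 ξm fm (fun _ : Fin 1 => ζ) (fun _ => g) X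
              + monomial ξm fm X * FVAux.Gam2 ξ' f' (fun _ : Fin 1 => ζ) (fun _ => g) X := by
          intro X
          rw [show (FVAux.Gam2 ((Sum.elim ξm ξ') ∘ finSumFinEquiv.symm)
              ((Sum.elim fm f') ∘ finSumFinEquiv.symm) (fun _ : Fin 1 => ζ) (fun _ => g) : _)
            = FVAux.Gam2 (Sum.elim ξm ξ') (Sum.elim fm f') (fun _ : Fin 1 => ζ) (fun _ => g)
            from FVAux.Gam2_reindex_left _ _ _ _ _, FVAux.Gam2_sum_left]
        have e2 : ∫ X, (monomial ξm fm X * monomial ξ' f' X)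
              * bPair a A V κ s r ρ (fun w => (X w : Measure E)) ζ g ∂P
            = -(1/2) * ((∫ X, monomial ξ' f' X
                  * FVAux.Gam2 ξm fm (fun _ : Fin 1 => ζ) (fun _ => g) X ∂P)
                + ∫ X, monomial ξm fm X
                  * FVAux.Gam2 ξ' f' (fun _ : Fin 1 => ζ) (fun _ => g) X ∂P) := by
          have h := hIBP' (m + n) ((Sum.elim ξm ξ') ∘ finSumFinEquiv.symm)
            ((Sum.elim fm f') ∘ finSumFinEquiv.symm) ζ g
          have hLHS : ∫ X, (monomial ξm fm X * monomial ξ' f' X)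
              * bPair a A V κ s r ρ (fun w => (X w : Measure E)) ζ g ∂P
              = ∫ X, monomial ((Sum.elim ξm ξ') ∘ finSumFinEquiv.symm)
                  ((Sum.elim fm f') ∘ finSumFinEquiv.symm) X
                * bPair a A V κ s r ρ (fun w => (X w : Measure E)) ζ g ∂P :=
            integral_congr_ae (ae_of_all _ fun X => by simp only [hm2])
          have hRHS : ∫ X, FVAux.Gam2 ((Sum.elim ξm ξ') ∘ finSumFinEquiv.symm)
                ((Sum.elim fm f') ∘ finSumFinEquiv.symm) (fun _ : Fin 1 => ζ) (fun _ => g) X ∂P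
              = (∫ X, monomial ξ' f' X
                  * FVAux.Gam2 ξm fm (fun _ : Fin 1 => ζ) (fun _ => g) X ∂P)
                + ∫ X, monomial ξm fm X
                  * FVAux.Gam2 ξ' f' (fun _ : Fin 1 => ζ) (fun _ => g) X ∂P := by
            rw [integral_congr_ae (ae_of_all P fun X => hg3 X)]
            exact integral_add ((hNΨ.mul hNG1).integrable P) ((hNΦ.mul hNG3).integrable P)
          rw [hLHS, h, hRHS]
        -- third piece
        have e3 : ∫ X, FVAux.Gam2 ξm fm (fun _ : Fin 1 => ζ) (fun _ => g) X * monomial ξ' f' X ∂P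
            = ∫ X, monomial ξ' f' X * FVAux.Gam2 ξm fm (fun _ : Fin 1 => ζ) (fun _ => g) X ∂P :=
          integral_congr_ae (ae_of_all _ fun X => mul_comm _ _)
        -- target decomposition
        have hg4 : ∀ X : I → ProbabilityMeasure E,
            FVAux.Gam2 ξh fh ξ' f' X
            = pairM (X ζ : Measure E) g * FVAux.Gam2 ξm fm ξ' f' X
              + monomial ξm fm X * FVAux.Gam2 ξ' f' (fun _ : Fin 1 => ζ) (fun _ => g) X := by
          intro X
          conv_lhs => rw [← hdx, ← hdf]
          rw [show (FVAux.Gam2 ((Sum.elim ξm fun _ : Fin 1 => ζ) ∘ finSumFinEquiv.symm)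
              ((Sum.elim fm fun _ : Fin 1 => g) ∘ finSumFinEquiv.symm) ξ' f' : _)
            = FVAux.Gam2 (Sum.elim ξm fun _ : Fin 1 => ζ) (Sum.elim fm fun _ : Fin 1 => g) ξ' f'
            from FVAux.Gam2_reindex_left _ _ _ _ _, FVAux.Gam2_sum_left,
            FVAux.monomial_single, FVAux.Gam2_symm (fun _ : Fin 1 => ζ) (fun _ => g) ξ' f' X]
        have etarget : ∫ X, FVAux.Gam2 ξh fh ξ' f' X ∂P
            = (∫ X, pairM (X ζ : Measure E) g * FVAux.Gam2 ξm fm ξ' f' X ∂P)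
              + ∫ X, monomial ξm fm X
                * FVAux.Gam2 ξ' f' (fun _ : Fin 1 => ζ) (fun _ => g) X ∂P := by
          rw [integral_congr_ae (ae_of_all P fun X => hg4 X)]
          exact integral_add ((hNg.mul hNG2).integrable P) ((hNΦ.mul hNG3).integrable P)
        rw [hmain, e1, e2, e3, etarget]
        ring
    -- symmetry on monomials
    have hsymm : ∀ (m n : ℕ) (ξ : Fin m → I) (f : Fin m → C(E, ℝ))
        (ξ' : Fin n → I) (f' : Fin n → C(E, ℝ)),
        ∫ X, L (monomial ξ f) X * monomial ξ' f' X ∂P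
          = ∫ X, L (monomial ξ' f') X * monomial ξ f X ∂P := by
      intro m n ξ f ξ' f'
      rw [hL m, hL n, claim m n ξ f ξ' f', claim n m ξ' f' ξ f]
      congr 1
      exact integral_congr_ae (ae_of_all _ fun X => FVAux.Gam2_symm ξ f ξ' f' X)
    -- niceness of polyAlg elements
    have hNicePoly : ∀ Φ ∈ polyAlg E I, FVAux.Nice Φ ∧ FVAux.Nice (L Φ) := by
      intro Φ hΦ
      induction hΦ using Submodule.span_induction with
      | mem x h =>
        obtain ⟨m, ξ, f, rfl⟩ := h
        exact ⟨FVAux.nice_monomial ξ f, hNiceL ξ f⟩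
      | zero =>
        refine ⟨⟨measurable_const, 0, fun X => by simp⟩, ?_⟩
        rw [map_zero]
        exact ⟨measurable_const, 0, fun X => by simp⟩
      | add x y hx hy ihx ihy =>
        refine ⟨ihx.1.add ihy.1, ?_⟩
        rw [map_add]
        exact ihx.2.add ihy.2
      | smul c x hx ihx =>
        refine ⟨ihx.1.const_mul c, ?_⟩
        rw [LinearMap.map_smul]
        exact ihx.2.const_mul c
    -- conclude reversibility by bilinearity
    intro Φ hΦ Ψ hΨ
    induction hΦ using Submodule.span_induction with
    | mem x hx =>
      obtain ⟨m, ξ, f, rfl⟩ := hx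
      induction hΨ using Submodule.span_induction with
      | mem y hy =>
        obtain ⟨n, ξ', f', rfl⟩ := hy
        exact hsymm m n ξ f ξ' f'
      | zero => simp [map_zero]
      | add y z hy hz ihy ihz =>
        have ny := hNicePoly y hy
        have nz := hNicePoly z hz
        have nx2 : FVAux.Nice (L (monomial ξ f)) := hNiceL ξ f
        have nx1 : FVAux.Nice (monomial ξ f) := FVAux.nice_monomial ξ f
        calc ∫ X, L (monomial ξ f) X * (y + z) X ∂P
            = ∫ X, (L (monomial ξ f) X * y X + L (monomial ξ f) X * z X) ∂P :=
              integral_congr_ae (ae_of_all _ fun X => by simp [mul_add])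
          _ = (∫ X, L (monomial ξ f) X * y X ∂P) + ∫ X, L (monomial ξ f) X * z X ∂P :=
              integral_add ((nx2.mul ny.1).integrable P) ((nx2.mul nz.1).integrable P)
          _ = (∫ X, L y X * monomial ξ f X ∂P) + ∫ X, L z X * monomial ξ f X ∂P := by
              rw [ihy, ihz]
          _ = ∫ X, (L y X * monomial ξ f X + L z X * monomial ξ f X) ∂P :=
              (integral_add ((ny.2.mul nx1).integrable P) ((nz.2.mul nx1).integrable P)).symm
          _ = ∫ X, L (y + z) X * monomial ξ f X ∂P :=
              integral_congr_ae (ae_of_all _ fun X => by rw [map_add]; simp [add_mul])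
      | smul c y hy ihy =>
        calc ∫ X, L (monomial ξ f) X * (c • y) X ∂P
            = ∫ X, c * (L (monomial ξ f) X * y X) ∂P :=
              integral_congr_ae (ae_of_all _ fun X => by
                simp [smul_eq_mul]; ring)
          _ = c * ∫ X, L (monomial ξ f) X * y X ∂P := integral_const_mul c _
          _ = c * ∫ X, L y X * monomial ξ f X ∂P := by rw [ihy]
          _ = ∫ X, c * (L y X * monomial ξ f X) ∂P := (integral_const_mul c _).symm
          _ = ∫ X, L (c • y) X * monomial ξ f X ∂P :=
              integral_congr_ae (ae_of_all _ fun X => by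
                rw [LinearMap.map_smul]; simp [smul_eq_mul]; ring)
    | zero => simp [map_zero]
    | add x y hx hy ihx ihy =>
      have nx := hNicePoly x hx
      have ny := hNicePoly y hy
      have nΨ := hNicePoly Ψ hΨ
      calc ∫ X, L (x + y) X * Ψ X ∂P
          = ∫ X, (L x X * Ψ X + L y X * Ψ X) ∂P :=
            integral_congr_ae (ae_of_all _ fun X => by rw [map_add]; simp [add_mul])
        _ = (∫ X, L x X * Ψ X ∂P) + ∫ X, L y X * Ψ X ∂P :=
            integral_add ((nx.2.mul nΨ.1).integrable P) ((ny.2.mul nΨ.1).integrable P)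
        _ = (∫ X, L Ψ X * x X ∂P) + ∫ X, L Ψ X * y X ∂P := by rw [ihx, ihy]
        _ = ∫ X, (L Ψ X * x X + L Ψ X * y X) ∂P :=
            (integral_add ((nΨ.2.mul nx.1).integrable P) ((nΨ.2.mul ny.1).integrable P)).symm
        _ = ∫ X, L Ψ X * (x + y) X ∂P :=
            integral_congr_ae (ae_of_all _ fun X => by simp [mul_add])
    | smul c x hx ihx =>
      calc ∫ X, L (c • x) X * Ψ X ∂P
          = ∫ X, c * (L x X * Ψ X) ∂P :=
            integral_congr_ae (ae_of_all _ fun X => by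
              rw [LinearMap.map_smul]; simp [smul_eq_mul]; ring)
        _ = c * ∫ X, L x X * Ψ X ∂P := integral_const_mul c _
        _ = c * ∫ X, L Ψ X * x X ∂P := by rw [ihx]
        _ = ∫ X, c * (L Ψ X * x X) ∂P := (integral_const_mul c _).symm
        _ = ∫ X, L Ψ X * (c • x) X ∂P :=
            integral_congr_ae (ae_of_all _ fun X => by simp [smul_eq_mul]; ring)


end
end
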